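/- arXiv:2007.07337 — 13 statements merged into one kernel-verified Lean document; each statement's English description precedes it below -/
import Mathlib

section
/- Let A be a real N×N matrix, B a real N×M matrix, C a real M×N matrix, and D a real M×M matrix. Suppose there exists a symmetric positive definite real N×N matrix Q such that A Q Aᵀ + B Bᵀ = Q, A Q Cᵀ + B Dᵀ = 0, and C Q Cᵀ + D Dᵀ = I. Then for every nonzero complex number z such that the complex matrices z·I − A and z⁻¹·I − A are invertible, one has (C (z·I − A)⁻¹ B + D) · (C (z⁻¹·I − A)⁻¹ B + D)ᵀ = I. -/
open Matrix

/-- Sufficiency direction of the classical state-space allpass theorem: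
if there is a symmetric positive definite `Q` with `A Q Aᵀ + B Bᵀ = Q`,
`A Q Cᵀ + B Dᵀ = 0` and `C Q Cᵀ + D Dᵀ = I`, then the transfer function
`T(z) = C (zI − A)⁻¹ B + D` satisfies `T(z) T(1/z)ᵀ = I`. -/
theorem statespace_allpass_sufficiency {N M : ℕ}
    (A : Matrix (Fin N) (Fin N) ℝ) (B : Matrix (Fin N) (Fin M) ℝ)
    (C : Matrix (Fin M) (Fin N) ℝ) (D : Matrix (Fin M) (Fin M) ℝ)
    (hQ : ∃ Q : Matrix (Fin N) (Fin N) ℝ, Q.PosDef ∧ Qᵀ = Q ∧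
      A * Q * Aᵀ + B * Bᵀ = Q ∧
      A * Q * Cᵀ + B * Dᵀ = 0 ∧
      C * Q * Cᵀ + D * Dᵀ = 1)
    (z : ℂ) (hz : z ≠ 0)
    (h1 : IsUnit (z • (1 : Matrix (Fin N) (Fin N) ℂ) - A.map Complex.ofReal).det)
    (h2 : IsUnit (z⁻¹ • (1 : Matrix (Fin N) (Fin N) ℂ) - A.map Complex.ofReal).det) :
    (C.map Complex.ofReal *
        (z • (1 : Matrix (Fin N) (Fin N) ℂ) - A.map Complex.ofReal)⁻¹ *
        B.map Complex.ofReal + D.map Complex.ofReal) *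
      (C.map Complex.ofReal *
        (z⁻¹ • (1 : Matrix (Fin N) (Fin N) ℂ) - A.map Complex.ofReal)⁻¹ *
        B.map Complex.ofReal + D.map Complex.ofReal)ᵀ = 1 := by
  obtain ⟨Q, _, hQsym, e1, e2, e3⟩ := hQ
  set f := Complex.ofRealHom with hf
  set Ac := A.map Complex.ofReal with hA
  set Bc := B.map Complex.ofReal with hB
  set Cc := C.map Complex.ofReal with hC
  set Dc := D.map Complex.ofReal with hD
  set Qc := Q.map Complex.ofReal with hQc
  have e1c : Ac * Qc * Acᵀ + Bc * Bcᵀ = Qc := by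
    have := congrArg (fun X => X.map (f : ℝ →+* ℂ)) e1
    simp [Matrix.map_mul, Matrix.map_add, Matrix.transpose_map] at this; exact this
  have e2c : Ac * Qc * Ccᵀ + Bc * Dcᵀ = 0 := by
    have := congrArg (fun X => X.map (f : ℝ →+* ℂ)) e2
    simp [Matrix.map_mul, Matrix.map_add, Matrix.transpose_map] at this; exact this
  have e3c : Cc * Qc * Ccᵀ + Dc * Dcᵀ = 1 := by
    have := congrArg (fun X => X.map (f : ℝ →+* ℂ)) e3
    simp [Matrix.map_mul, Matrix.map_add, Matrix.transpose_map] at this; exact this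
  have hQcsym : Qcᵀ = Qc := by
    rw [hQc, ← Matrix.transpose_map, hQsym]
  have e2c' : Cc * Qc * Acᵀ + Dc * Bcᵀ = 0 := by
    have := congrArg Matrix.transpose e2c
    simpa [Matrix.transpose_add, Matrix.transpose_mul, hQcsym, Matrix.mul_assoc] using this
  set E : Matrix (Fin N) (Fin N) ℂ := z • 1 - Ac with hE
  set F : Matrix (Fin N) (Fin N) ℂ := z⁻¹ • 1 - Ac with hF
  set G : Matrix (Fin N) (Fin N) ℂ := z⁻¹ • 1 - Acᵀ with hG
  have hGF : Fᵀ = G := by simp [hF, hG, Matrix.transpose_sub, Matrix.transpose_smul]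
  have hGdet : IsUnit G.det := by rw [← hGF, Matrix.det_transpose]; exact h2
  have hFG : (F⁻¹)ᵀ = G⁻¹ := by rw [← hGF, Matrix.transpose_nonsing_inv]
  have hEinv : E⁻¹ * E = 1 := Matrix.nonsing_inv_mul E h1
  have hGinv : G * G⁻¹ = 1 := Matrix.mul_nonsing_inv G hGdet
  -- key identity
  have hkey : Bc * Bcᵀ = E * Qc * G + E * (Qc * Acᵀ) + Ac * Qc * G := by
    have hb : Bc * Bcᵀ = Qc - Ac * Qc * Acᵀ := eq_sub_of_add_eq' e1c
    rw [hb, hE, hG]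
    simp only [sub_mul, mul_sub, smul_mul_assoc, mul_smul_comm, smul_smul, one_mul, mul_one,
      mul_inv_cancel₀ hz, inv_mul_cancel₀ hz, one_smul, mul_assoc]
    match_scalars <;> field_simp <;> ring
  have r : ∀ X : Matrix (Fin N) (Fin N) ℂ, E⁻¹ * (E * X) = X := fun X => by
    rw [← mul_assoc, hEinv, one_mul]
  have hmid : E⁻¹ * (Bc * Bcᵀ) * G⁻¹ = Qc + Qc * Acᵀ * G⁻¹ + E⁻¹ * (Ac * Qc) := by
    rw [hkey]
    calc E⁻¹ * (E * Qc * G + E * (Qc * Acᵀ) + Ac * Qc * G) * G⁻¹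
        = E⁻¹ * (E * (Qc * G)) * G⁻¹ + E⁻¹ * (E * (Qc * Acᵀ)) * G⁻¹
          + E⁻¹ * (Ac * Qc) * (G * G⁻¹) := by noncomm_ring
      _ = Qc + Qc * Acᵀ * G⁻¹ + E⁻¹ * (Ac * Qc) := by
          rw [r, r]; simp only [mul_assoc, hGinv, mul_one]
  have hBD : Bc * Dcᵀ = -(Ac * Qc * Ccᵀ) := by
    rw [eq_neg_iff_add_eq_zero, add_comm]; exact e2c
  have hDB : Dc * Bcᵀ = -(Cc * Qc * Acᵀ) := by
    rw [eq_neg_iff_add_eq_zero, add_comm]; exact e2c'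
  have goalT : (Cc * F⁻¹ * Bc + Dc)ᵀ = Bcᵀ * ((F⁻¹)ᵀ * Ccᵀ) + Dcᵀ := by
    simp [Matrix.transpose_add, Matrix.transpose_mul, Matrix.mul_assoc]
  rw [goalT, hFG, ← e3c]
  calc (Cc * E⁻¹ * Bc + Dc) * (Bcᵀ * (G⁻¹ * Ccᵀ) + Dcᵀ)
      = Cc * (E⁻¹ * (Bc * Bcᵀ) * G⁻¹) * Ccᵀ + Cc * E⁻¹ * (Bc * Dcᵀ)
        + Dc * Bcᵀ * (G⁻¹ * Ccᵀ) + Dc * Dcᵀ := by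
        simp only [Matrix.add_mul, Matrix.mul_add, Matrix.mul_assoc]
        abel
    _ = Cc * Qc * Ccᵀ + Dc * Dcᵀ := by
        rw [hmid, hBD, hDB]
        simp only [Matrix.mul_neg, Matrix.neg_mul, Matrix.mul_add, Matrix.add_mul,
          Matrix.mul_assoc]
        abel
end

section
/- Let A be a real N×N matrix, B a real N×M matrix, C a real M×N matrix, D a real M×M matrix, m a delay vector, and E a real invertible diagonal N×N matrix. For every complex z such that P_m(z) = diagonal(z^{m_1},…,z^{m_N}) − A is invertible, the matrix diagonal(z^{m_1},…,z^{m_N}) − E⁻¹AE is also invertible and C E (diagonal(z^{m_1},…,z^{m_N}) − E⁻¹AE)⁻¹ E⁻¹ B + D = C (diagonal(z^{m_1},…,z^{m_N}) − A)⁻¹ B + D. -/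
open Matrix

/-- Diagonal-similarity invariance of the FDN transfer function:
for an invertible real diagonal matrix `E = diagonal e`, whenever the loop matrix
`P_m(z) = diagonal(z^{m_i}) − A` is invertible, so is `diagonal(z^{m_i}) − E⁻¹AE`,
and `C E (diagonal(z^{m_i}) − E⁻¹AE)⁻¹ E⁻¹ B + D = C (diagonal(z^{m_i}) − A)⁻¹ B + D`. -/
theorem fdn_transfer_diag_similarity_invariant {N M : ℕ}
    (A : Matrix (Fin N) (Fin N) ℝ) (B : Matrix (Fin N) (Fin M) ℝ)
    (C : Matrix (Fin M) (Fin N) ℝ) (D : Matrix (Fin M) (Fin M) ℝ)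
    (m : Fin N → ℕ) (hm : ∀ i, 1 ≤ m i)
    (e : Fin N → ℝ) (he : ∀ i, e i ≠ 0)
    (z : ℂ)
    (hinv : IsUnit (Matrix.diagonal (fun i => z ^ m i) - A.map Complex.ofReal).det) :
    IsUnit (Matrix.diagonal (fun i => z ^ m i)
        - (Matrix.diagonal fun i => (e i : ℂ))⁻¹ * A.map Complex.ofReal *
            Matrix.diagonal (fun i => (e i : ℂ))).det ∧
    C.map Complex.ofReal * Matrix.diagonal (fun i => (e i : ℂ)) *
        (Matrix.diagonal (fun i => z ^ m i)
          - (Matrix.diagonal fun i => (e i : ℂ))⁻¹ * A.map Complex.ofReal *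
              Matrix.diagonal (fun i => (e i : ℂ)))⁻¹ *
        (Matrix.diagonal fun i => (e i : ℂ))⁻¹ * B.map Complex.ofReal
        + D.map Complex.ofReal
      = C.map Complex.ofReal *
          (Matrix.diagonal (fun i => z ^ m i) - A.map Complex.ofReal)⁻¹ *
          B.map Complex.ofReal + D.map Complex.ofReal := by
  set Ec : Matrix (Fin N) (Fin N) ℂ := Matrix.diagonal (fun i => (e i : ℂ)) with hEc
  set P : Matrix (Fin N) (Fin N) ℂ :=
    Matrix.diagonal (fun i => z ^ m i) - A.map Complex.ofReal with hP
  have hEdet : IsUnit Ec.det := by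
    rw [hEc, Matrix.det_diagonal]
    exact isUnit_iff_ne_zero.mpr (Finset.prod_ne_zero_iff.mpr fun i _ => by
      exact_mod_cast Complex.ofReal_ne_zero.mpr (he i))
  have hEinv : Ec⁻¹ * Ec = 1 := Matrix.nonsing_inv_mul _ hEdet
  have hEinv' : Ec * Ec⁻¹ = 1 := Matrix.mul_nonsing_inv _ hEdet
  have hcomm : Ec⁻¹ * Matrix.diagonal (fun i => z ^ m i)
      = Matrix.diagonal (fun i => z ^ m i) * Ec⁻¹ := by
    rw [hEc, Matrix.inv_diagonal, Matrix.diagonal_mul_diagonal,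
      Matrix.diagonal_mul_diagonal]
    exact congrArg Matrix.diagonal (funext fun i => mul_comm _ _)
  have key : Matrix.diagonal (fun i => z ^ m i) - Ec⁻¹ * A.map Complex.ofReal * Ec
      = Ec⁻¹ * P * Ec := by
    rw [hP, Matrix.mul_sub, Matrix.sub_mul, hcomm,
      Matrix.mul_assoc (Matrix.diagonal fun i => z ^ m i) Ec⁻¹ Ec, hEinv, Matrix.mul_one]
  rw [key]
  constructor
  · rw [Matrix.det_mul, Matrix.det_mul, mul_comm, ← mul_assoc, mul_comm Ec.det,
      ← Matrix.det_mul, hEinv, Matrix.det_one, one_mul]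
    exact hinv
  · rw [Matrix.mul_inv_rev, Matrix.mul_inv_rev, Matrix.nonsing_inv_nonsing_inv _ hEdet]
    calc C.map Complex.ofReal * Ec * (Ec⁻¹ * (P⁻¹ * Ec)) * Ec⁻¹ * B.map Complex.ofReal
          + D.map Complex.ofReal
        = C.map Complex.ofReal * (Ec * Ec⁻¹) * P⁻¹ * (Ec * Ec⁻¹) * B.map Complex.ofReal
          + D.map Complex.ofReal := by
          simp only [Matrix.mul_assoc]
      _ = _ := by rw [hEinv', Matrix.mul_one, Matrix.mul_one]
end

section
/- Let A be a real N×N matrix and m a delay vector. Suppose there exists a real invertible diagonal N×N matrix E such that the ℓ²-operator norm of E⁻¹ A E is strictly less than 1. Then every complex number z with det(diagonal(z^{m_1},…,z^{m_N}) − A) = 0 satisfies |z| < 1. -/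
set_option synthInstance.maxHeartbeats 400000
set_option maxHeartbeats 1000000


open Matrix

/-- FDN stability: if some diagonal similarity of the feedback matrix `A` has
ℓ²-operator norm below one, then all roots of the generalized characteristic
polynomial `det(diagonal(z^{m_i}) − A)` lie in the open unit disc. -/
theorem fdn_stable_of_diag_similar_contraction {N : ℕ}
    (A : Matrix (Fin N) (Fin N) ℝ)
    (m : Fin N → ℕ) (hm : ∀ i, 1 ≤ m i)
    (h : ∃ e : Fin N → ℝ, (∀ i, e i ≠ 0) ∧
      ‖Matrix.toEuclideanCLM (𝕜 := ℝ)
          ((Matrix.diagonal e)⁻¹ * A * Matrix.diagonal e)‖ < 1) :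
    ∀ z : ℂ,
      (Matrix.diagonal (fun i => z ^ m i) - A.map Complex.ofReal).det = 0 →
      ‖z‖ < 1 := by
  obtain ⟨e, he, hBnorm⟩ := h
  set B : Matrix (Fin N) (Fin N) ℝ := (Matrix.diagonal e)⁻¹ * A * Matrix.diagonal e with hBdef
  set c := ‖Matrix.toEuclideanCLM (𝕜 := ℝ) B‖ with hc
  have hc0 : 0 ≤ c := norm_nonneg _
  -- key real estimate
  have key : ∀ v : Fin N → ℝ, ∑ i, (B.mulVec v i) ^ 2 ≤ c ^ 2 * ∑ i, (v i) ^ 2 := by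
    intro v
    have h1 := (Matrix.toEuclideanCLM (𝕜 := ℝ) B).le_opNorm ((WithLp.equiv 2 _).symm v)
    rw [WithLp.equiv_symm_apply, Matrix.toEuclideanCLM_toLp] at h1
    have h2 : Real.sqrt (∑ i, (B.mulVec v i) ^ 2) ≤ c * Real.sqrt (∑ i, (v i) ^ 2) := by
      simpa [EuclideanSpace.norm_eq, Real.norm_eq_abs, sq_abs, Matrix.toLin'_apply] using h1
    calc ∑ i, (B.mulVec v i) ^ 2
        = Real.sqrt (∑ i, (B.mulVec v i) ^ 2) ^ 2 := (Real.sq_sqrt (by positivity)).symm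
      _ ≤ (c * Real.sqrt (∑ i, (v i) ^ 2)) ^ 2 := by
          apply pow_le_pow_left₀ (Real.sqrt_nonneg _) h2
      _ = c ^ 2 * ∑ i, (v i) ^ 2 := by rw [mul_pow, Real.sq_sqrt (by positivity)]
  intro z hz
  by_contra hlt
  push_neg at hlt
  obtain ⟨y, hy0, hy⟩ := (Matrix.exists_mulVec_eq_zero_iff).2 hz
  have hAy : (A.map Complex.ofReal).mulVec y = fun i => z ^ m i * y i := by
    rw [Matrix.sub_mulVec, sub_eq_zero] at hy
    funext i
    rw [← congrFun hy i, Matrix.mulVec_diagonal]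
  -- diagonal similarity, entrywise
  have hdet : IsUnit (Matrix.diagonal e).det := by
    rw [Matrix.det_diagonal]
    exact (Finset.prod_ne_zero_iff.2 fun i _ => he i).isUnit
  have hEB : Matrix.diagonal e * B = A * Matrix.diagonal e := by
    rw [hBdef, ← Matrix.mul_assoc, ← Matrix.mul_assoc, Matrix.mul_nonsing_inv _ hdet,
      Matrix.one_mul]
  have hentry : ∀ i j, e i * B i j = A i j * e j := by
    intro i j
    have := congrFun (congrFun hEB i) j
    rwa [Matrix.diagonal_mul, Matrix.mul_diagonal] at this
  set u : Fin N → ℂ := fun i => (e i : ℂ)⁻¹ * y i with hu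
  have hei : ∀ i, (e i : ℂ) ≠ 0 := fun i => by exact_mod_cast he i
  have hBu : ∀ i, ∑ j, (B i j : ℂ) * u j = z ^ m i * u i := by
    intro i
    have hA : ∑ j, (A i j : ℂ) * y j = z ^ m i * y i := by
      have := congrFun hAy i
      simpa [Matrix.mulVec, dotProduct, Matrix.map_apply] using this
    have step : ∑ j, (B i j : ℂ) * u j = (e i : ℂ)⁻¹ * ∑ j, (A i j : ℂ) * y j := by
      rw [Finset.mul_sum]
      refine Finset.sum_congr rfl fun j _ => ?_
      have hj : (e i : ℂ) * (B i j : ℂ) = (A i j : ℂ) * (e j : ℂ) := by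
        exact_mod_cast congrArg Complex.ofReal (hentry i j)
      have hBij : (B i j : ℂ) = ((A i j : ℂ) * (e j : ℂ)) / (e i : ℂ) := by
        rw [eq_div_iff (hei i)]; linear_combination hj
      rw [hu, hBij]
      field_simp
      rw [div_eq_div_iff (mul_ne_zero (hei j) (hei i)) (hei i)]
      ring
    rw [step, hA, hu]
    ring
  -- u ≠ 0
  have hune : ∃ i, u i ≠ 0 := by
    obtain ⟨i, hi⟩ := Function.ne_iff.mp hy0
    exact ⟨i, mul_ne_zero (inv_ne_zero (hei i)) hi⟩
  -- real and imaginary parts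
  set ur : Fin N → ℝ := fun j => (u j).re with hur
  set vi : Fin N → ℝ := fun j => (u j).im with hvi
  have hre : ∀ i, B.mulVec ur i = (z ^ m i * u i).re := by
    intro i
    rw [← hBu i]
    simp [Matrix.mulVec, dotProduct, Complex.re_sum, hur]
  have him : ∀ i, B.mulVec vi i = (z ^ m i * u i).im := by
    intro i
    rw [← hBu i]
    simp [Matrix.mulVec, dotProduct, Complex.im_sum, hvi]
  set S := ∑ i, ‖u i‖ ^ 2 with hS
  have hSpos : 0 < S := by
    obtain ⟨i, hi⟩ := hune
    have : 0 < ‖u i‖ ^ 2 := pow_pos (norm_pos_iff.mpr hi) 2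
    exact Finset.sum_pos' (fun j _ => by positivity) ⟨i, Finset.mem_univ i, this⟩
  have habs : ∀ w : ℂ, ‖w‖ ^ 2 = w.re ^ 2 + w.im ^ 2 := by
    intro w
    rw [Complex.sq_norm, Complex.normSq_apply]
    ring
  have hge1 : ∀ (k : ℕ) (w : ℂ), ‖w‖ ^ 2 ≤ ‖z ^ k * w‖ ^ 2 := by
    intro k w
    rw [norm_mul, norm_pow, mul_pow, ← pow_mul]
    nth_rewrite 1 [← one_mul (‖w‖ ^ 2)]
    exact mul_le_mul_of_nonneg_right (one_le_pow₀ hlt) (by positivity)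
  have hge : S ≤ ∑ i, ‖z ^ m i * u i‖ ^ 2 :=
    Finset.sum_le_sum fun i _ => hge1 (m i) (u i)
  have hle : ∑ i, ‖z ^ m i * u i‖ ^ 2 ≤ c ^ 2 * S := by
    have expand : ∑ i, ‖z ^ m i * u i‖ ^ 2
        = (∑ i, (B.mulVec ur i) ^ 2) + (∑ i, (B.mulVec vi i) ^ 2) := by
      rw [← Finset.sum_add_distrib]
      refine Finset.sum_congr rfl fun i _ => ?_
      rw [habs, hre, him]
    rw [expand, hS]
    have hSsplit : ∑ i, ‖u i‖ ^ 2 = (∑ i, ur i ^ 2) + (∑ i, vi i ^ 2) := by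
      rw [← Finset.sum_add_distrib]
      exact Finset.sum_congr rfl fun i _ => habs (u i)
    rw [hSsplit, mul_add]
    exact add_le_add (key ur) (key vi)
  have hcsq : c ^ 2 < 1 := by
    have := pow_lt_one₀ hc0 hBnorm (n := 2) (by norm_num)
    exact this
  have : S < S := by
    calc S ≤ ∑ i, ‖z ^ m i * u i‖ ^ 2 := hge
      _ ≤ c ^ 2 * S := hle
      _ < 1 * S := by exact mul_lt_mul_of_pos_right hcsq hSpos
      _ = S := one_mul S
  exact lt_irrefl _ this
end

section
/- Let A be a real N×N matrix, B a real N×M matrix, C a real M×N matrix, and D a real M×M matrix. Suppose there exists a diagonal positive definite real N×N matrix Q such that A Q Aᵀ + B Bᵀ = Q, A Q Cᵀ + B Dᵀ = 0, and C Q Cᵀ + D Dᵀ = I. Let E be the diagonal matrix whose i-th diagonal entry is the positive square root of the i-th diagonal entry of Q. Then the (N+M)×(N+M) block matrix S̃ = [[E⁻¹AE, E⁻¹B],[CE, D]] is orthogonal, i.e., S̃ S̃ᵀ = I. -/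
open Matrix

/-- Balanced form: if `(A,B,C,D)` satisfies the uniallpass condition with a
diagonal positive definite `Q = diagonal q`, and `E = diagonal (√(q i))`, then the
block matrix `[[E⁻¹AE, E⁻¹B],[CE, D]]` is orthogonal. -/
theorem uniallpass_balanced_form {N M : ℕ}
    (A : Matrix (Fin N) (Fin N) ℝ) (B : Matrix (Fin N) (Fin M) ℝ)
    (C : Matrix (Fin M) (Fin N) ℝ) (D : Matrix (Fin M) (Fin M) ℝ)
    (q : Fin N → ℝ) (hQ : (Matrix.diagonal q).PosDef)
    (h1 : A * Matrix.diagonal q * Aᵀ + B * Bᵀ = Matrix.diagonal q)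
    (h2 : A * Matrix.diagonal q * Cᵀ + B * Dᵀ = 0)
    (h3 : C * Matrix.diagonal q * Cᵀ + D * Dᵀ = 1) :
    (Matrix.fromBlocks
        ((Matrix.diagonal fun i => Real.sqrt (q i))⁻¹ * A *
          Matrix.diagonal fun i => Real.sqrt (q i))
        ((Matrix.diagonal fun i => Real.sqrt (q i))⁻¹ * B)
        (C * Matrix.diagonal fun i => Real.sqrt (q i))
        D) *
      (Matrix.fromBlocks
        ((Matrix.diagonal fun i => Real.sqrt (q i))⁻¹ * A *
          Matrix.diagonal fun i => Real.sqrt (q i))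
        ((Matrix.diagonal fun i => Real.sqrt (q i))⁻¹ * B)
        (C * Matrix.diagonal fun i => Real.sqrt (q i))
        D)ᵀ = 1 := by
  have hq : ∀ i, 0 < q i := Matrix.posDef_diagonal_iff.mp hQ
  set E : Matrix (Fin N) (Fin N) ℝ := Matrix.diagonal fun i => Real.sqrt (q i) with hE
  have hs : ∀ i, Real.sqrt (q i) ≠ 0 := fun i =>
    ne_of_gt (Real.sqrt_pos.mpr (hq i))
  have hEinv : E⁻¹ = Matrix.diagonal fun i => (Real.sqrt (q i))⁻¹ := by
    rw [hE, Matrix.inv_eq_left_inv]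
    rw [Matrix.diagonal_mul_diagonal]
    simp [inv_mul_cancel₀, hs]
  have hET : Eᵀ = E := by rw [hE, Matrix.diagonal_transpose]
  have hEE : E * E = Matrix.diagonal q := by
    rw [hE, Matrix.diagonal_mul_diagonal]
    have : (fun i => Real.sqrt (q i) * Real.sqrt (q i)) = q :=
      funext fun i => Real.mul_self_sqrt (hq i).le
    rw [this]
  have hinvE : E⁻¹ * E = 1 := by
    rw [hEinv, hE, Matrix.diagonal_mul_diagonal]
    simp [inv_mul_cancel₀, hs]
  have hEinvT : (E⁻¹)ᵀ = E⁻¹ := by rw [hEinv, Matrix.diagonal_transpose]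
  rw [Matrix.fromBlocks_transpose, Matrix.fromBlocks_multiply]
  have htl : E⁻¹ * A * E * (E⁻¹ * A * E)ᵀ + E⁻¹ * B * (E⁻¹ * B)ᵀ = 1 := by
    have : E⁻¹ * A * E * (E⁻¹ * A * E)ᵀ + E⁻¹ * B * (E⁻¹ * B)ᵀ
        = E⁻¹ * (A * Matrix.diagonal q * Aᵀ + B * Bᵀ) * E⁻¹ := by
      rw [← hEE]
      simp only [Matrix.transpose_mul, hET, hEinvT]
      simp only [Matrix.mul_add, Matrix.add_mul, Matrix.mul_assoc]
    rw [this, h1, ← hEE]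
    rw [show E⁻¹ * (E * E) * E⁻¹ = E⁻¹ * E * (E * E⁻¹) by simp only [Matrix.mul_add, Matrix.add_mul, Matrix.mul_assoc]]
    rw [hinvE, mul_eq_one_comm.mp hinvE]
    simp
  have htr : E⁻¹ * A * E * (C * E)ᵀ + E⁻¹ * B * Dᵀ = 0 := by
    have : E⁻¹ * A * E * (C * E)ᵀ + E⁻¹ * B * Dᵀ
        = E⁻¹ * (A * Matrix.diagonal q * Cᵀ + B * Dᵀ) := by
      rw [← hEE]
      simp only [Matrix.transpose_mul, hET]
      simp only [Matrix.mul_add, Matrix.add_mul, Matrix.mul_assoc]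
    rw [this, h2, Matrix.mul_zero]
  have hbl : C * E * (E⁻¹ * A * E)ᵀ + D * (E⁻¹ * B)ᵀ = 0 := by
    have : C * E * (E⁻¹ * A * E)ᵀ + D * (E⁻¹ * B)ᵀ
        = (E⁻¹ * (A * Matrix.diagonal q * Cᵀ + B * Dᵀ))ᵀ := by
      rw [← hEE]
      simp only [Matrix.transpose_mul, Matrix.transpose_add, Matrix.transpose_transpose,
        hET, hEinvT]
      simp only [Matrix.mul_add, Matrix.add_mul, Matrix.mul_assoc]
    rw [this, h2, Matrix.mul_zero, Matrix.transpose_zero]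
  have hbr : C * E * (C * E)ᵀ + D * Dᵀ = 1 := by
    have : C * E * (C * E)ᵀ = C * Matrix.diagonal q * Cᵀ := by
      rw [← hEE]
      simp only [Matrix.transpose_mul, hET]
      simp only [Matrix.mul_add, Matrix.add_mul, Matrix.mul_assoc]
    rw [this, h3]
  rw [htl, htr, hbl, hbr, Matrix.fromBlocks_one]
end

section
/- Let A be a real N×N matrix, B a real N×M matrix, C a real M×N matrix, and D a real M×M matrix, and suppose there exists a diagonal positive definite real N×N matrix Q such that A Q Aᵀ + B Bᵀ = Q, A Q Cᵀ + B Dᵀ = 0, and C Q Cᵀ + D Dᵀ = I. Let S be the (N+M)×(N+M) block matrix [[A,B],[C,D]]. Then det S equals 1 or −1, and det D = (det S) · (det A). -/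
open Matrix

/-- For a uniallpass FDN (uniallpass condition with diagonal positive definite `Q`),
the system matrix `S = [[A,B],[C,D]]` has determinant `±1` and
`det D = det S · det A`. -/
theorem uniallpass_det_system_matrix {N M : ℕ}
    (A : Matrix (Fin N) (Fin N) ℝ) (B : Matrix (Fin N) (Fin M) ℝ)
    (C : Matrix (Fin M) (Fin N) ℝ) (D : Matrix (Fin M) (Fin M) ℝ)
    (hQ : ∃ q : Fin N → ℝ, (Matrix.diagonal q).PosDef ∧
      A * Matrix.diagonal q * Aᵀ + B * Bᵀ = Matrix.diagonal q ∧
      A * Matrix.diagonal q * Cᵀ + B * Dᵀ = 0 ∧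
      C * Matrix.diagonal q * Cᵀ + D * Dᵀ = 1) :
    ((Matrix.fromBlocks A B C D).det = 1 ∨ (Matrix.fromBlocks A B C D).det = -1) ∧
    D.det = (Matrix.fromBlocks A B C D).det * A.det := by
  obtain ⟨q, hpd, h1, h2, h3⟩ := hQ
  set Q := Matrix.diagonal q with hQdef
  set S := Matrix.fromBlocks A B C D with hSdef
  -- transpose of the second condition
  have h2' : C * Q * Aᵀ + D * Bᵀ = 0 := by
    have := congrArg Matrix.transpose h2
    simpa [Matrix.transpose_add, Matrix.transpose_mul, Matrix.diagonal_transpose,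
      Matrix.mul_assoc, hQdef] using this
  -- key identity : S * P * Sᵀ = P  with P = fromBlocks Q 0 0 1
  have key : S * Matrix.fromBlocks Q 0 0 (1 : Matrix (Fin M) (Fin M) ℝ) * Sᵀ
      = Matrix.fromBlocks Q 0 0 1 := by
    rw [hSdef, Matrix.fromBlocks_transpose, Matrix.fromBlocks_multiply,
      Matrix.fromBlocks_multiply]
    simp only [Matrix.mul_zero, Matrix.zero_mul, Matrix.mul_one, add_zero, zero_add,
      Matrix.add_mul, ← Matrix.mul_assoc]
    rw [h1, h2, h2', h3]
  have hdetQ : Q.det ≠ 0 := ne_of_gt hpd.det_pos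
  have hdetP : (Matrix.fromBlocks Q 0 0 (1 : Matrix (Fin M) (Fin M) ℝ)).det = Q.det := by
    rw [Matrix.det_fromBlocks_zero₂₁]; simp
  have hdetkey := congrArg Matrix.det key
  rw [Matrix.det_mul, Matrix.det_mul, Matrix.det_transpose, hdetP] at hdetkey
  have hsq : S.det * S.det = 1 := by
    have : S.det * S.det * Q.det = 1 * Q.det := by ring_nf; linarith [hdetkey]
    exact mul_right_cancel₀ hdetQ this
  have hpm : S.det = 1 ∨ S.det = -1 := mul_self_eq_one_iff.mp hsq
  refine ⟨hpm, ?_⟩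
  -- S * [[1, Q Cᵀ],[0, Dᵀ]] = [[A, 0],[C, 1]]
  have key2 : S * Matrix.fromBlocks 1 (Q * Cᵀ) 0 Dᵀ = Matrix.fromBlocks A 0 C 1 := by
    have e2 : A * (Q * Cᵀ) + B * Dᵀ = 0 := by rw [← Matrix.mul_assoc]; exact h2
    have e3 : C * (Q * Cᵀ) + D * Dᵀ = 1 := by rw [← Matrix.mul_assoc]; exact h3
    rw [hSdef, Matrix.fromBlocks_multiply]
    simp [e2, e3]
  have hdetkey2 := congrArg Matrix.det key2
  rw [Matrix.det_mul, Matrix.det_fromBlocks_zero₂₁, Matrix.det_fromBlocks_zero₁₂] at hdetkey2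
  simp only [Matrix.det_one, one_mul, mul_one, Matrix.det_transpose] at hdetkey2
  -- hdetkey2 : S.det * D.det = A.det
  calc D.det = S.det * S.det * D.det := by rw [hsq, one_mul]
    _ = S.det * A.det := by rw [mul_assoc, hdetkey2]
end

section
/- Let A be an invertible real N×N matrix, b, c ∈ ℝ^N, d a nonzero real number, and set A_S = A − d⁻¹ b cᵀ. Suppose there exists a ∈ {1, −1} such that det(A_S[S]) = a · det((A⁻¹)[S]) for every subset S ⊆ {1,…,N}. Then for every delay vector m and every nonzero complex z: (det A) · det(diagonal(z^{m_1},…,z^{m_N}) − A_S) = a · (−1)^N · z^{m_1+⋯+m_N} · det(diagonal(z^{−m_1},…,z^{−m_N}) − A). -/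
open Matrix

section Aux
variable {n : Type*} [Fintype n] [DecidableEq n] {R : Type*} [CommRing R]

lemma det_piecewise_diagonal (v : n → R) (M : Matrix n n R) (s : Finset n) :
    Matrix.det (s.piecewise (Matrix.diagonal v) M : Matrix n n R)
      = (∏ i ∈ s, v i) *
        (M.submatrix (fun i : {x // x ∉ s} => (i : n))
          (fun i : {x // x ∉ s} => (i : n))).det := by
  classical
  let X : Matrix n n R := s.piecewise (Matrix.diagonal v) M
  let e := Equiv.sumCompl (fun x => x ∈ s)
  have key : X.submatrix e e
      = Matrix.fromBlocks (Matrix.diagonal (fun i : {x // x ∈ s} => v i)) 0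
          (M.submatrix (fun i : {x // x ∉ s} => (i : n)) (fun i : {x // x ∈ s} => (i : n)))
          (M.submatrix (fun i : {x // x ∉ s} => (i : n)) (fun i : {x // x ∉ s} => (i : n))) := by
    ext i j
    rw [submatrix_apply]
    cases i with
    | inl i =>
      cases j with
      | inl j =>
        simp only [submatrix_apply, Equiv.sumCompl_apply_inl, fromBlocks_apply₁₁, X, e,
          Finset.piecewise, i.2, if_true]
        by_cases h : i = j
        · subst h; simp [diagonal_apply_eq]
        · rw [diagonal_apply_ne, diagonal_apply_ne _ h]
          exact fun hh => h (Subtype.ext hh)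
      | inr j =>
        have hne : ((i : n)) ≠ (j : n) := fun hh => j.2 (hh ▸ i.2)
        simp only [submatrix_apply, Equiv.sumCompl_apply_inl, Equiv.sumCompl_apply_inr,
          fromBlocks_apply₁₂, Matrix.zero_apply, X, e, Finset.piecewise, i.2, if_true]
        exact diagonal_apply_ne _ hne
    | inr i =>
      cases j with
      | inl j =>
        simp only [submatrix_apply, Equiv.sumCompl_apply_inr, Equiv.sumCompl_apply_inl,
          fromBlocks_apply₂₁, X, e, Finset.piecewise, i.2, if_false]
      | inr j =>
        simp only [submatrix_apply, Equiv.sumCompl_apply_inr, fromBlocks_apply₂₂, X, e,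
          Finset.piecewise, i.2, if_false]
  calc Matrix.det X = (X.submatrix e e).det := (Matrix.det_submatrix_equiv_self e X).symm
    _ = _ := by rw [key, Matrix.det_fromBlocks_zero₁₂, Matrix.det_diagonal,
        Finset.prod_coe_sort]

/-- Expansion of `det (diagonal v + M)` over subsets. -/
lemma det_diagonal_add (v : n → R) (M : Matrix n n R) :
    (Matrix.diagonal v + M).det
      = ∑ s : Finset n, (∏ i ∈ s, v i) *
        (M.submatrix (fun i : {x // x ∉ s} => (i : n))
          (fun i : {x // x ∉ s} => (i : n))).det := by
  classical
  have h := (Matrix.detRowAlternating (R := R) (n := n)).toMultilinearMap.map_add_univ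
    (Matrix.diagonal v) M
  simp only [← det_piecewise_diagonal]
  exact h

lemma card_notmem_subtype (s : Finset n) : Fintype.card {x // x ∉ s} = sᶜ.card := by
  rw [Fintype.card_subtype]
  congr 1
  ext x
  simp

lemma submatrix_mul_diag {p : Type*} [Fintype p] [DecidableEq p]
    (B : Matrix n n R) (w : n → R) (c : p → n) :
    (B * Matrix.diagonal w).submatrix c c
      = B.submatrix c c * Matrix.diagonal (fun j => w (c j)) := by
  ext i j
  simp [Matrix.mul_diagonal]

end Aux

/-- Principal minor of `A` indexed by the subset `s`. -/
noncomputable def principalMinor {N : ℕ} (A : Matrix (Fin N) (Fin N) ℝ)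
    (s : Finset (Fin N)) : ℝ :=
  (A.submatrix (fun i : {x // x ∈ s} => (i : Fin N))
    (fun i : {x // x ∈ s} => (i : Fin N))).det

lemma minor_notmem {N : ℕ} (M : Matrix (Fin N) (Fin N) ℝ) (s : Finset (Fin N)) :
    (M.submatrix (fun i : {x // x ∉ s} => (i : Fin N))
      (fun i : {x // x ∉ s} => (i : Fin N))).det = principalMinor M sᶜ := by
  let e : {x // x ∈ sᶜ} ≃ {x // x ∉ s} :=
    Equiv.subtypeEquivRight (fun x => Finset.mem_compl)
  have h := Matrix.det_submatrix_equiv_self e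
    (M.submatrix (fun i : {x // x ∉ s} => (i : Fin N)) (fun i : {x // x ∉ s} => (i : Fin N)))
  rw [Matrix.submatrix_submatrix] at h
  exact h.symm.trans rfl

lemma minor_map {N : ℕ} (M : Matrix (Fin N) (Fin N) ℝ) (s : Finset (Fin N)) :
    (((M.map Complex.ofReal)).submatrix (fun i : {x // x ∉ s} => (i : Fin N))
      (fun i : {x // x ∉ s} => (i : Fin N))).det = (principalMinor M sᶜ : ℂ) := by
  rw [Matrix.submatrix_map]
  have h2 := (RingHom.map_det Complex.ofRealHom
    (M.submatrix (fun i : {x // x ∉ s} => (i : Fin N))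
      (fun i : {x // x ∉ s} => (i : Fin N)))).symm
  rw [minor_notmem] at h2
  exact h2

/-- If the principal minors of `A_S = A − d⁻¹ b cᵀ` match those of `A⁻¹` up to a
common sign `a = ±1`, then for every delay vector `m` and nonzero `z`,
`det A · det(diagonal(z^{m_i}) − A_S) = a (−1)^N z^{Σ m_i} det(diagonal(z^{−m_i}) − A)`. -/
theorem gcp_reversed_of_principal_minors {N : ℕ}
    (A : Matrix (Fin N) (Fin N) ℝ) (hA : IsUnit A.det)
    (b c : Fin N → ℝ) (d : ℝ) (hd : d ≠ 0)
    (a : ℝ) (ha : a = 1 ∨ a = -1)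
    (hpm : ∀ s : Finset (Fin N),
      principalMinor (A - d⁻¹ • Matrix.vecMulVec b c) s = a * principalMinor A⁻¹ s)
    (m : Fin N → ℕ) (hm : ∀ i, 1 ≤ m i) (z : ℂ) (hz : z ≠ 0) :
    (A.det : ℂ) *
        (Matrix.diagonal (fun i => z ^ m i)
          - (A - d⁻¹ • Matrix.vecMulVec b c).map Complex.ofReal).det
      = (a : ℂ) * (-1) ^ N * z ^ (∑ i, m i) *
        (Matrix.diagonal (fun i => z ^ (-(m i : ℤ)))
          - A.map Complex.ofReal).det := by
  classical
  set As : Matrix (Fin N) (Fin N) ℝ := A - d⁻¹ • Matrix.vecMulVec b c with hAsdef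
  set Ac : Matrix (Fin N) (Fin N) ℂ := A.map Complex.ofReal with hAc
  set Sc : Matrix (Fin N) (Fin N) ℂ := As.map Complex.ofReal with hSc
  set B : Matrix (Fin N) (Fin N) ℂ := A⁻¹.map Complex.ofReal with hB
  set D' : Matrix (Fin N) (Fin N) ℂ := Matrix.diagonal (fun i => z ^ (-(m i : ℤ))) with hD'
  have hAB : Ac * B = 1 := by
    have h1 : ((A * A⁻¹).map Complex.ofReal : Matrix (Fin N) (Fin N) ℂ) = Ac * B :=
      Matrix.map_mul (f := Complex.ofRealHom)
    rw [← h1, Matrix.mul_nonsing_inv A hA]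
    exact Matrix.map_one _ (by simp) (by simp)
  have hdetAc : Ac.det = (A.det : ℂ) := (RingHom.map_det Complex.ofRealHom A).symm
  -- LHS expansion
  have hL : (Matrix.diagonal (fun i => z ^ m i) - Sc).det
      = ∑ s : Finset (Fin N), (∏ i ∈ s, z ^ m i) *
          ((-1 : ℂ) ^ sᶜ.card * ((a : ℂ) * (principalMinor A⁻¹ sᶜ : ℂ))) := by
    rw [sub_eq_add_neg, det_diagonal_add]
    refine Finset.sum_congr rfl fun s _ => ?_
    congr 1
    have hneg : ((-Sc).submatrix (fun i : {x // x ∉ s} => (i : Fin N))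
        (fun i : {x // x ∉ s} => (i : Fin N)))
        = -(Sc.submatrix (fun i : {x // x ∉ s} => (i : Fin N))
            (fun i : {x // x ∉ s} => (i : Fin N))) := rfl
    rw [hneg, Matrix.det_neg, card_notmem_subtype, hSc, minor_map, hpm sᶜ]
    push_cast
    ring
  -- RHS expansion
  have hkey : Ac * (B * D' - 1) = D' - Ac := by
    rw [Matrix.mul_sub, Matrix.mul_one, ← Matrix.mul_assoc, hAB, Matrix.one_mul]
  have hR0 : (D' - Ac).det = Ac.det * (B * D' - 1).det := by
    rw [← hkey, Matrix.det_mul]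
  have hsplit : B * D' - 1 = Matrix.diagonal (fun _ : Fin N => (-1 : ℂ)) + B * D' := by
    rw [sub_eq_add_neg, add_comm]
    congr 1
    rw [← Matrix.diagonal_one, ← Matrix.diagonal_neg]
  have hR1 : (B * D' - 1).det
      = ∑ s : Finset (Fin N), (-1 : ℂ) ^ s.card *
          ((principalMinor A⁻¹ sᶜ : ℂ) * ∏ j ∈ sᶜ, z ^ (-(m j : ℤ))) := by
    rw [hsplit, det_diagonal_add]
    refine Finset.sum_congr rfl fun s _ => ?_
    rw [Finset.prod_const, submatrix_mul_diag, Matrix.det_mul, Matrix.det_diagonal, hB,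
      minor_map]
    congr 1
    congr 1
    exact (Finset.prod_subtype sᶜ (fun x => Finset.mem_compl) (fun j => z ^ (-(m j : ℤ)))).symm
  -- combine
  rw [hL, hR0, hR1, hdetAc, Finset.mul_sum, Finset.mul_sum]
  rw [Finset.mul_sum]
  refine Finset.sum_congr rfl fun s _ => ?_
  have hsle : s.card ≤ N := by
    simpa using Finset.card_le_univ s
  have hsign : ((-1 : ℂ)) ^ sᶜ.card = (-1) ^ N * (-1) ^ s.card := by
    have h1 : N + s.card = sᶜ.card + 2 * s.card := by
      rw [Finset.card_compl, Fintype.card_fin]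
      omega
    calc ((-1 : ℂ)) ^ sᶜ.card = (-1) ^ sᶜ.card * ((-1) ^ 2) ^ s.card := by norm_num
      _ = (-1) ^ (sᶜ.card + 2 * s.card) := by rw [← pow_mul, ← pow_add]
      _ = (-1) ^ (N + s.card) := by rw [← h1]
      _ = (-1) ^ N * (-1) ^ s.card := pow_add _ _ _
  have hcompl : (∏ j ∈ sᶜ, z ^ m j) ≠ 0 :=
    Finset.prod_ne_zero_iff.mpr (fun _ _ => pow_ne_zero _ hz)
  have hz2 : z ^ (∑ i, m i) * ∏ j ∈ sᶜ, z ^ (-(m j : ℤ)) = ∏ i ∈ s, z ^ m i := by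
    have h3 : ∏ j ∈ sᶜ, z ^ (-(m j : ℤ)) = (∏ j ∈ sᶜ, z ^ m j)⁻¹ := by
      rw [← Finset.prod_inv_distrib]
      exact Finset.prod_congr rfl fun j _ => by rw [_root_.zpow_neg, zpow_natCast]
    have h4 : z ^ (∑ i, m i) = (∏ i ∈ s, z ^ m i) * ∏ j ∈ sᶜ, z ^ m j := by
      rw [Finset.prod_mul_prod_compl s (fun i => z ^ m i), Finset.prod_pow_eq_pow_sum]
    rw [h3, h4, mul_assoc, mul_inv_cancel₀ hcompl, mul_one]
  linear_combination ((A.det : ℂ) * (principalMinor A⁻¹ sᶜ : ℂ) * (a : ℂ)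
      * (∏ i ∈ s, z ^ m i)) * hsign
    - ((A.det : ℂ) * (principalMinor A⁻¹ sᶜ : ℂ) * (a : ℂ) * ((-1 : ℂ) ^ N
      * (-1 : ℂ) ^ s.card)) * hz2
end

section
/- Let A be an invertible real N×N matrix, b, c ∈ ℝ^N, and d a real number with d = det A or d = −det A (in particular d ≠ 0). Set A_S = A − d⁻¹ b cᵀ and suppose there exists a ∈ {1, −1} such that det(A_S[S]) = a · det((A⁻¹)[S]) for every subset S ⊆ {1,…,N}. Then for every delay vector m and every complex z with |z| = 1 and det(diagonal(z^{m_1},…,z^{m_N}) − A) ≠ 0, the scalar transfer function satisfies |cᵀ (diagonal(z^{m_1},…,z^{m_N}) − A)⁻¹ b + d| = 1. -/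
open Matrix

lemma det_rows_piecewise {n : ℕ} {R : Type*} [CommRing R] (s : Finset (Fin n))
    (M : Matrix (Fin n) (Fin n) R) :
    (Matrix.of fun i j => if i ∈ s then M i j else (if i = j then (1:R) else 0)).det =
      (M.submatrix (fun i : {x // x ∈ s} => (i : Fin n))
        (fun i : {x // x ∈ s} => (i : Fin n))).det := by
  classical
  set e : {x // x ∈ s} ⊕ {x // x ∉ s} ≃ Fin n := Equiv.sumCompl (· ∈ s)
  rw [← det_submatrix_equiv_self e]
  have he : (Matrix.of fun i j => if i ∈ s then M i j else (if i = j then (1:R) else 0)).submatrix e e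
      = Matrix.fromBlocks
        (M.submatrix (fun i : {x // x ∈ s} => (i : Fin n)) (fun i : {x // x ∈ s} => (i : Fin n)))
        (M.submatrix (fun i : {x // x ∈ s} => (i : Fin n)) (fun i : {x // x ∉ s} => (i : Fin n)))
        0 1 := by
    ext (i | i) (j | j)
    · simp [e, i.2]
    · simp [e, i.2]
    · have : (i : Fin n) ≠ (j : Fin n) := by
        intro h; exact i.2 (h ▸ j.2)
      simp [e, i.2, this]
    · by_cases h : i = j
      · subst h; simp [e, i.2]
      · have : (i : Fin n) ≠ (j : Fin n) := fun hh => h (Subtype.ext hh)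
        simp [e, i.2, this, Matrix.one_apply, h]
  rw [he, det_fromBlocks_zero₂₁, det_one, mul_one]

lemma det_diagonal_sub {n : ℕ} {R : Type*} [CommRing R] (d : Fin n → R)
    (M : Matrix (Fin n) (Fin n) R) :
    (Matrix.diagonal d - M).det =
      ∑ s : Finset (Fin n), (-1) ^ s.card * (∏ i ∈ sᶜ, d i) *
        (M.submatrix (fun i : {x // x ∈ s} => (i : Fin n))
          (fun i : {x // x ∈ s} => (i : Fin n))).det := by
  classical
  have h0 : Matrix.diagonal d - M = (fun i => - M i) + (fun i => Matrix.diagonal d i) := by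
    funext i j
    show Matrix.diagonal d i j - M i j = - M i j + Matrix.diagonal d i j
    ring
  have h1 : (Matrix.diagonal d - M).det
      = Matrix.detRowAlternating ((fun i => - M i) + (fun i => Matrix.diagonal d i)) := by
    rw [← h0]
    rfl
  have h1' := (Matrix.detRowAlternating (R := R) (n := Fin n)).toMultilinearMap.map_add_univ
    (fun i => - M i) (fun i => Matrix.diagonal d i)
  rw [h1.trans h1']
  apply Finset.sum_congr rfl
  intro s _
  have h2 : Finset.piecewise s (fun i => - M i) (fun i => Matrix.diagonal d i)
      = Matrix.of (fun i j => (if i ∈ s then (-1 : R) else d i) *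
          (Matrix.of fun i j => if i ∈ s then M i j else (if i = j then (1:R) else 0)) i j) := by
    ext i j
    by_cases h : i ∈ s <;> simp [Finset.piecewise, h, Matrix.diagonal, Matrix.one_apply, mul_ite]
  have h3 : Matrix.detRowAlternating (Finset.piecewise s (fun i => - M i) (fun i => Matrix.diagonal d i))
      = (Matrix.of (fun i j => (if i ∈ s then (-1 : R) else d i) *
          (Matrix.of fun i j => if i ∈ s then M i j else (if i = j then (1:R) else 0)) i j)).det := by
    rw [← h2]
    rfl
  rw [show (Matrix.detRowAlternating (R := R) (n := Fin n)).toMultilinearMap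
      (Finset.piecewise s (fun i => - M i) (fun i => Matrix.diagonal d i)) = _ from h3, Matrix.det_mul_column, det_rows_piecewise]
  congr 1
  rw [← Finset.prod_mul_prod_compl s]
  congr 1
  · rw [Finset.prod_congr rfl (fun i hi => if_pos hi), Finset.prod_const]
  · exact Finset.prod_congr rfl (fun i hi => if_neg (Finset.mem_compl.mp hi))

/-- Sufficiency direction of the SISO uniallpass characterization: if
`d = ± det A`, `A_S = A − d⁻¹ b cᵀ`, and the principal minors of `A_S` match those
of `A⁻¹` up to a common sign, then the scalar transfer function
`cᵀ (diagonal(z^{m_i}) − A)⁻¹ b + d` has modulus one on the unit circle, for every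
choice of delays. -/
theorem siso_uniallpass_of_principal_minors {N : ℕ}
    (A : Matrix (Fin N) (Fin N) ℝ) (hA : IsUnit A.det)
    (b c : Fin N → ℝ) (d : ℝ) (hd : d = A.det ∨ d = -A.det)
    (a : ℝ) (ha : a = 1 ∨ a = -1)
    (hpm : ∀ s : Finset (Fin N),
      principalMinor (A - d⁻¹ • Matrix.vecMulVec b c) s = a * principalMinor A⁻¹ s)
    (m : Fin N → ℕ) (hm : ∀ i, 1 ≤ m i)
    (z : ℂ) (hz : ‖z‖ = 1)
    (hdet : (Matrix.diagonal (fun i => z ^ m i) - A.map Complex.ofReal).det ≠ 0) :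
    ‖((fun i => (c i : ℂ)) ⬝ᵥ
          ((Matrix.diagonal (fun i => z ^ m i) - A.map Complex.ofReal)⁻¹ *ᵥ
            fun i => (b i : ℂ)) + (d : ℂ))‖ = 1 := by
  classical
  set φ : ℝ →+* ℂ := Complex.ofRealHom with hφ
  have hmapφ : A.map Complex.ofReal = A.map φ := rfl
  set Aℂ : Matrix (Fin N) (Fin N) ℂ := A.map φ with hAℂ
  set 𝔻 : Matrix (Fin N) (Fin N) ℂ := Matrix.diagonal (fun i => z ^ m i) with h𝔻
  set E : Matrix (Fin N) (Fin N) ℂ := 𝔻 - Aℂ with hE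
  have hdetA : A.det ≠ 0 := hA.ne_zero
  have hd0 : d ≠ 0 := by rcases hd with h | h <;> simp [h, hdetA]
  have hdC0 : (d : ℂ) ≠ 0 := by exact_mod_cast hd0
  have hAℂdet : Aℂ.det = (A.det : ℂ) := (RingHom.map_det φ A).symm
  have hAℂunit : IsUnit Aℂ.det := by
    rw [hAℂdet]; exact (isUnit_iff_ne_zero).2 (by exact_mod_cast hdetA)
  have hEdet : E.det ≠ 0 := hdet
  have hEunit : IsUnit E.det := isUnit_iff_ne_zero.2 hEdet
  set bℂ : Fin N → ℂ := fun i => (b i : ℂ) with hbℂ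
  set cℂ : Fin N → ℂ := fun i => (c i : ℂ) with hcℂ
  set T : ℂ := cℂ ⬝ᵥ (E⁻¹ *ᵥ bℂ) with hT
  set AS : Matrix (Fin N) (Fin N) ℝ := A - d⁻¹ • Matrix.vecMulVec b c with hAS
  -- Step A
  have hsplit : 𝔻 - AS.map φ = E + Matrix.replicateCol Unit ((d:ℂ)⁻¹ • bℂ) * Matrix.replicateRow Unit cℂ := by
    rw [← Matrix.vecMulVec_eq]
    ext i j
    simp [hAS, hE, Matrix.vecMulVec_apply, Matrix.sub_apply, Matrix.map_apply,
      Matrix.smul_apply, smul_eq_mul, hbℂ, hcℂ]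
    push_cast
    simp only [hAℂ, Matrix.map_apply, hφ, Complex.ofRealHom_eq_coe]
    ring
  have hstepA : (T + (d:ℂ)) * E.det = (d:ℂ) * (𝔻 - AS.map φ).det := by
    rw [hsplit, Matrix.det_add_replicateCol_mul_replicateRow hEunit]
    have : ((1 : Matrix Unit Unit ℂ) + Matrix.replicateRow Unit cℂ * E⁻¹ * Matrix.replicateCol Unit ((d:ℂ)⁻¹ • bℂ)).det
        = 1 + (d:ℂ)⁻¹ * T := by
      rw [Matrix.det_unique]
      have h1 : Matrix.replicateRow Unit cℂ * E⁻¹ = Matrix.replicateRow Unit (cℂ ᵥ* E⁻¹) :=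
        (Matrix.replicateRow_vecMul E⁻¹ cℂ).symm
      simp only [Matrix.add_apply, Matrix.one_apply_eq, h1, Matrix.replicateRow_mul_replicateCol_apply]
      rw [dotProduct_smul, ← dotProduct_mulVec]
      simp [hT, smul_eq_mul]
    rw [this]
    field_simp
    ring
  -- Step B
  have hminor : ∀ (X : Matrix (Fin N) (Fin N) ℝ) (s : Finset (Fin N)),
      ((X.map φ).submatrix (fun i : {x // x ∈ s} => (i : Fin N))
        (fun i : {x // x ∈ s} => (i : Fin N))).det = (principalMinor X s : ℂ) := by
    intro X s
    rw [Matrix.submatrix_map]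
    exact (RingHom.map_det φ _).symm
  have hstepB : (𝔻 - AS.map φ).det = (a : ℂ) * (𝔻 - A⁻¹.map φ).det := by
    rw [h𝔻, det_diagonal_sub, det_diagonal_sub, Finset.mul_sum]
    apply Finset.sum_congr rfl
    intro s _
    rw [hminor, hminor, hpm s]
    push_cast
    ring
  -- Step C
  have hinvmap : A⁻¹.map φ = Aℂ⁻¹ := by
    symm
    apply Matrix.inv_eq_left_inv
    rw [hAℂ, ← Matrix.map_mul, Matrix.nonsing_inv_mul A hA, Matrix.map_one φ φ.map_zero φ.map_one]
  have hstepC : (𝔻 - A⁻¹.map φ).det * Aℂ.det = (𝔻 * Aℂ - 1).det := by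
    rw [hinvmap, ← Matrix.det_mul, Matrix.sub_mul, Matrix.nonsing_inv_mul Aℂ hAℂunit]
  -- Step D
  have hzconj : z * (starRingEnd ℂ) z = 1 := by
    rw [Complex.mul_conj]
    norm_cast
    rw [← Complex.sq_norm, hz, one_pow]
  set 𝔻' : Matrix (Fin N) (Fin N) ℂ := Matrix.diagonal (fun i => (starRingEnd ℂ) z ^ m i) with h𝔻'
  have h𝔻𝔻' : 𝔻 * 𝔻' = 1 := by
    rw [h𝔻, h𝔻', Matrix.diagonal_mul_diagonal]
    convert Matrix.diagonal_one
    rw [← mul_pow, hzconj, one_pow]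
  have hconjE : 𝔻' - Aℂ = E.map (starRingEnd ℂ) := by
    ext i j
    simp only [hE, Matrix.map_apply, Matrix.sub_apply, h𝔻, h𝔻', Matrix.diagonal_apply, hAℂ,
      Matrix.map_apply, map_sub]
    congr 1
    · split <;> simp
    · simp [hφ, Complex.conj_ofReal]
  have hstepD : (𝔻 * Aℂ - 1).det = (-1)^N * 𝔻.det * (starRingEnd ℂ) E.det := by
    have h1 : 𝔻 * Aℂ - 1 = -(𝔻 * (𝔻' - Aℂ)) := by
      rw [Matrix.mul_sub, h𝔻𝔻']
      rw [neg_sub]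
    rw [h1, Matrix.det_neg, Matrix.det_mul, hconjE]
    have h2 : ((starRingEnd ℂ).mapMatrix E).det = (starRingEnd ℂ) E.det :=
      (RingHom.map_det _ _).symm
    have h3 : E.map ⇑(starRingEnd ℂ) = (starRingEnd ℂ).mapMatrix E := rfl
    rw [h3, h2, Fintype.card_fin]
    ring
  -- Combine
  have key : (T + (d:ℂ)) * E.det * Aℂ.det
      = (d:ℂ) * (a:ℂ) * ((-1)^N * 𝔻.det * (starRingEnd ℂ) E.det) := by
    rw [hstepA, hstepB]
    rw [mul_assoc ((d:ℂ)) ((a:ℂ)) _, ← hstepD, ← hstepC]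
    ring
  have habs := congrArg (fun x : ℂ => ‖x‖) key
  simp only [norm_mul] at habs
  have h𝔻abs : ‖𝔻.det‖ = 1 := by
    rw [h𝔻, Matrix.det_diagonal]
    rw [norm_prod]
    simp [norm_pow, hz]
  have haabs : ‖(a : ℂ)‖ = 1 := by
    rcases ha with h | h <;> simp [h]
  have hdabsA : ‖Aℂ.det‖ = ‖(d:ℂ)‖ := by
    rw [hAℂdet]
    rcases hd with h | h <;> simp [h]
  have hEabs0 : ‖E.det‖ ≠ 0 := by simpa using hEdet
  have hdabs0 : ‖(d:ℂ)‖ ≠ 0 := by simpa using hd0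
  have hneg : ‖((-1 : ℂ)^N)‖ = 1 := by simp
  rw [h𝔻abs, haabs, hdabsA, Complex.norm_conj, hneg] at habs
  have hfin : ‖T + (d:ℂ)‖ * (‖E.det‖ * ‖(d:ℂ)‖)
      = 1 * (‖E.det‖ * ‖(d:ℂ)‖) := by
    rw [one_mul]; nlinarith [habs]
  exact mul_right_cancel₀ (mul_ne_zero hEabs0 hdabs0) hfin
end

section
/- Let A be a real N×N matrix such that I − AᵀA is positive definite (equivalently, all singular values of A are strictly less than 1). Then there exist real N×N matrices B, C, D such that the 2N×2N block matrix [[A,B],[C,D]] is orthogonal. -/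
open Matrix

section Aux

variable {N : ℕ}

/-- If `1 - AᵀA` is positive definite, so is `1 - AAᵀ`. -/
lemma posDef_one_sub_mul_transpose {N : ℕ} (A : Matrix (Fin N) (Fin N) ℝ)
    (hA : ((1 : Matrix (Fin N) (Fin N) ℝ) - Aᵀ * A).PosDef) :
    ((1 : Matrix (Fin N) (Fin N) ℝ) - A * Aᵀ).PosDef := by
  rw [posDef_iff_dotProduct_mulVec]
  constructor
  · have : (A * Aᵀ).IsHermitian := by
      simpa [conjTranspose_eq_transpose_of_trivial] using
        isHermitian_mul_conjTranspose_self A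
    exact isHermitian_one.sub this
  · intro x hx
    rw [star_trivial]
    by_contra hneg
    push_neg at hneg
    set u := Aᵀ *ᵥ x with hu
    have e1 : x ⬝ᵥ ((A * Aᵀ) *ᵥ x) = u ⬝ᵥ u := by
      rw [← mulVec_mulVec, dotProduct_mulVec, hu, mulVec_transpose]
    have hxx : (0:ℝ) < x ⬝ᵥ x := by
      have := (dotProduct_star_self_pos_iff (v := x)).2 hx
      simpa using this
    have huu_ge : x ⬝ᵥ x ≤ u ⬝ᵥ u := by
      have : x ⬝ᵥ ((1 - A * Aᵀ) *ᵥ x) = x ⬝ᵥ x - u ⬝ᵥ u := by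
        rw [sub_mulVec, dotProduct_sub, one_mulVec, e1]
      linarith [this ▸ hneg]
    have hu0 : u ≠ 0 := by
      intro h
      rw [h] at huu_ge
      simp at huu_ge
      linarith
    have huu_pos : (0:ℝ) < u ⬝ᵥ u := lt_of_lt_of_le hxx huu_ge
    set w := A *ᵥ u with hw
    have hP := hA.dotProduct_mulVec_pos hu0
    rw [star_trivial] at hP
    have e2 : u ⬝ᵥ ((Aᵀ * A) *ᵥ u) = w ⬝ᵥ w := by
      rw [← mulVec_mulVec, dotProduct_mulVec, vecMul_transpose]
    have hww : w ⬝ᵥ w < u ⬝ᵥ u := by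
      have : u ⬝ᵥ ((1 - Aᵀ * A) *ᵥ u) = u ⬝ᵥ u - w ⬝ᵥ w := by
        rw [sub_mulVec, dotProduct_sub, one_mulVec, e2]
      linarith [this ▸ hP]
    have hww0 : (0:ℝ) ≤ w ⬝ᵥ w := by
      simpa using dotProduct_star_self_nonneg w
    have exw : x ⬝ᵥ w = u ⬝ᵥ u := by
      rw [hw, dotProduct_mulVec, ← mulVec_transpose]
    -- Cauchy–Schwarz
    have cs : (x ⬝ᵥ w) ^ 2 ≤ (x ⬝ᵥ x) * (w ⬝ᵥ w) := by
      have := Finset.sum_mul_sq_le_sq_mul_sq Finset.univ x w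
      simpa [dotProduct, sq] using this
    rw [exw] at cs
    nlinarith

end Aux

open scoped MatrixOrder

/-- Full MIMO orthogonal completion: a real square matrix `A` with `I − AᵀA`
positive definite (all singular values strictly below one) is the top-left block
of some orthogonal `2N×2N` matrix `[[A,B],[C,D]]`. -/
theorem orthogonal_completion_full_mimo {N : ℕ}
    (A : Matrix (Fin N) (Fin N) ℝ)
    (hA : ((1 : Matrix (Fin N) (Fin N) ℝ) - Aᵀ * A).PosDef) :
    ∃ (B C D : Matrix (Fin N) (Fin N) ℝ),
      Matrix.fromBlocks A B C D * (Matrix.fromBlocks A B C D)ᵀ = 1 := by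
  set P : Matrix (Fin N) (Fin N) ℝ := 1 - Aᵀ * A with hPdef
  set Q : Matrix (Fin N) (Fin N) ℝ := 1 - A * Aᵀ with hQdef
  have hQ : Q.PosDef := posDef_one_sub_mul_transpose A hA
  set T := CFC.sqrt P with hTdef
  set S := CFC.sqrt Q with hSdef
  have hTT : T * T = P := CFC.sqrt_mul_sqrt_self P hA.posSemidef.nonneg
  have hSS : S * S = Q := CFC.sqrt_mul_sqrt_self Q hQ.posSemidef.nonneg
  have hTsym : Tᵀ = T := by
    have := (CFC.sqrt_nonneg P).posSemidef.1
    simpa [conjTranspose_eq_transpose_of_trivial, Matrix.IsSymm] using this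
  have hSsym : Sᵀ = S := by
    have := (CFC.sqrt_nonneg Q).posSemidef.1
    simpa [conjTranspose_eq_transpose_of_trivial, Matrix.IsSymm] using this
  have hPdet : IsUnit P.det := hA.det_pos.ne'.isUnit
  have hQdet : IsUnit Q.det := hQ.det_pos.ne'.isUnit
  have hSdet : IsUnit S.det := by
    have : S.det * S.det = Q.det := by rw [← det_mul, hSS]
    exact isUnit_of_mul_isUnit_left (this ▸ hQdet)
  have hTdet : IsUnit T.det := by
    have : T.det * T.det = P.det := by rw [← det_mul, hTT]
    exact isUnit_of_mul_isUnit_left (this ▸ hPdet)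
  have hSinv : S * S⁻¹ = 1 := mul_nonsing_inv S hSdet
  have hSinv' : S⁻¹ * S = 1 := nonsing_inv_mul S hSdet
  have hTinv : T * T⁻¹ = 1 := mul_nonsing_inv T hTdet
  have hTinv' : T⁻¹ * T = 1 := nonsing_inv_mul T hTdet
  have hQinv : Q * Q⁻¹ = 1 := mul_nonsing_inv Q hQdet
  -- key intertwining identity (purely algebraic)
  have hPA : P * Aᵀ = Aᵀ * Q := by
    rw [hPdef, hQdef]; noncomm_ring
  have hkey : P * (1 + Aᵀ * Q⁻¹ * A) = 1 := by
    have : P * (Aᵀ * Q⁻¹ * A) = Aᵀ * A := by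
      calc P * (Aᵀ * Q⁻¹ * A) = (P * Aᵀ) * Q⁻¹ * A := by noncomm_ring
        _ = Aᵀ * (Q * Q⁻¹) * A := by rw [hPA]; noncomm_ring
        _ = Aᵀ * A := by rw [hQinv]; noncomm_ring
    rw [mul_add, mul_one, this, hPdef]
    noncomm_ring
  have hPinv : P⁻¹ = 1 + Aᵀ * Q⁻¹ * A := inv_eq_right_inv hkey
  refine ⟨S, T, -(T * Aᵀ * S⁻¹), ?_⟩
  rw [fromBlocks_transpose, fromBlocks_multiply]
  have hSinvT : (S⁻¹)ᵀ = S⁻¹ := by rw [transpose_nonsing_inv, hSsym]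
  have hDT : (-(T * Aᵀ * S⁻¹))ᵀ = -(S⁻¹ * A * T) := by
    simp [transpose_mul, hSinvT, hTsym, Matrix.mul_assoc]
  have h11 : A * Aᵀ + S * Sᵀ = 1 := by
    rw [hSsym, hSS, hQdef]; noncomm_ring
  have h12 : A * Tᵀ + S * (-(T * Aᵀ * S⁻¹))ᵀ = 0 := by
    rw [hDT, hTsym]
    calc A * T + S * -(S⁻¹ * A * T) = A * T - (S * S⁻¹) * (A * T) := by noncomm_ring
      _ = 0 := by rw [hSinv]; noncomm_ring
  have h21 : T * Aᵀ + -(T * Aᵀ * S⁻¹) * Sᵀ = 0 := by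
    rw [hSsym]
    calc T * Aᵀ + -(T * Aᵀ * S⁻¹) * S = T * Aᵀ - (T * Aᵀ) * (S⁻¹ * S) := by noncomm_ring
      _ = 0 := by rw [hSinv']; noncomm_ring
  have hQinvSS : S⁻¹ * S⁻¹ = Q⁻¹ := by rw [← Matrix.mul_inv_rev, hSS]
  have h22 : T * Tᵀ + -(T * Aᵀ * S⁻¹) * (-(T * Aᵀ * S⁻¹))ᵀ = 1 := by
    rw [hDT, hTsym]
    have e : -(T * Aᵀ * S⁻¹) * -(S⁻¹ * A * T) = T * (Aᵀ * Q⁻¹ * A) * T := by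
      rw [← hQinvSS]; noncomm_ring
    rw [e]
    calc T * T + T * (Aᵀ * Q⁻¹ * A) * T = T * (1 + Aᵀ * Q⁻¹ * A) * T := by noncomm_ring
      _ = T * P⁻¹ * T := by rw [hPinv]
      _ = T * (T⁻¹ * T⁻¹) * T := by rw [← hTT, Matrix.mul_inv_rev]
      _ = (T * T⁻¹) * (T⁻¹ * T) := by noncomm_ring
      _ = 1 := by rw [hTinv, hTinv', one_mul]
  rw [h11, h12, h21, h22, fromBlocks_one]
end

section
/- Let A be a real N×N matrix such that I − AᵀA is positive semidefinite of rank at most M. Then there exist a real N×M matrix B, a real M×N matrix C, and a real M×M matrix D such that the (N+M)×(N+M) block matrix [[A,B],[C,D]] is orthogonal. -/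
open Matrix

/-- Factorization of a psd matrix of rank at most `M` as `Cᵀ * C` with `C` having `M` rows. -/
lemma fiedler_aux_factor {N M : ℕ} (P : Matrix (Fin N) (Fin N) ℝ)
    (hP : P.PosSemidef) (hr : P.rank ≤ M) :
    ∃ C : Matrix (Fin M) (Fin N) ℝ, Cᵀ * C = P := by
  obtain ⟨S, rfl⟩ : ∃ S : Matrix (Fin N) (Fin N) ℝ, P = Sᴴ * S := by
    open MatrixOrder in
    obtain ⟨X, hX, -, hXP⟩ := sub_zero P ▸ CFC.exists_sqrt_of_isSelfAdjoint_of_quasispectrumRestricts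
      hP.isHermitian (QuasispectrumRestricts.nnreal_of_nonneg hP.nonneg)
    exact ⟨X, by rw [sub_zero] at hXP; rw [← hXP, ← Matrix.star_eq_conjTranspose, hX.star_eq]⟩
  rw [Matrix.rank_conjTranspose_mul_self] at hr
  set e : (Fin N → ℝ) ≃ₗ[ℝ] EuclideanSpace ℝ (Fin N) :=
    (WithLp.linearEquiv 2 ℝ (Fin N → ℝ)).symm with he
  set K : Submodule ℝ (EuclideanSpace ℝ (Fin N)) :=
    (Submodule.span ℝ (Set.range Sᵀ)).map (e : (Fin N → ℝ) →ₗ[ℝ] EuclideanSpace ℝ (Fin N)) with hKdef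
  have hK : Module.finrank ℝ K ≤ M := by
    rw [hKdef, LinearEquiv.finrank_map_eq]
    rw [Matrix.rank_eq_finrank_span_cols] at hr
    exact hr
  set d := Module.finrank ℝ K with hd
  let b := stdOrthonormalBasis ℝ K
  let col : Fin N → K := fun j =>
    ⟨e (Sᵀ j), Submodule.mem_map_of_mem (Submodule.subset_span ⟨j, rfl⟩)⟩
  refine ⟨Matrix.of fun k j => if h : (k : ℕ) < d then (inner ℝ (b ⟨k, h⟩) (col j) : ℝ) else 0, ?_⟩
  ext j k
  simp only [Matrix.mul_apply, Matrix.transpose_apply, Matrix.conjTranspose_apply, star_trivial, Matrix.of_apply]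
  have hsum : ∀ i : Fin M,
      (if h : (i : ℕ) < d then (inner ℝ (b ⟨i, h⟩) (col j) : ℝ) else 0) *
      (if h : (i : ℕ) < d then (inner ℝ (b ⟨i, h⟩) (col k) : ℝ) else 0) =
      if h : (i : ℕ) < d then
        (inner ℝ (col j) (b ⟨i, h⟩) : ℝ) * (inner ℝ (b ⟨i, h⟩) (col k) : ℝ) else 0 := by
    intro i
    by_cases h : (i : ℕ) < d
    · simp only [dif_pos h]
      rw [real_inner_comm (b ⟨(i : ℕ), h⟩) (col j)]
    · simp [h]
  rw [Finset.sum_congr rfl (fun i _ => hsum i)]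
  rw [← Finset.sum_subset (Finset.subset_univ ((Finset.univ : Finset (Fin d)).map
    (Fin.castLEEmb hK)))]
  · rw [Finset.sum_map]
    have : ∀ i : Fin d,
        (if h : ((Fin.castLEEmb hK i : Fin M) : ℕ) < d then
          (inner ℝ (col j) (b ⟨(Fin.castLEEmb hK i : Fin M), h⟩) : ℝ) *
          (inner ℝ (b ⟨(Fin.castLEEmb hK i : Fin M), h⟩) (col k) : ℝ) else 0) =
        (inner ℝ (col j) (b i) : ℝ) * (inner ℝ (b i) (col k) : ℝ) := by
      intro i
      have hi : ((Fin.castLEEmb hK i : Fin M) : ℕ) < d := i.isLt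
      rw [dif_pos hi]
      have h2 : (⟨((Fin.castLEEmb hK i : Fin M) : ℕ), hi⟩ : Fin (Module.finrank ℝ K)) = i :=
        Fin.ext rfl
      rw [h2]
    rw [Finset.sum_congr rfl (fun i _ => this i)]
    rw [b.sum_inner_mul_inner (col j) (col k)]
    have : (inner ℝ (col j) (col k) : ℝ) = inner ℝ ((col j : EuclideanSpace ℝ (Fin N)))
        ((col k : EuclideanSpace ℝ (Fin N))) := rfl
    rw [this]
    rw [PiLp.inner_apply]
    simp [col, RCLike.inner_apply, he, mul_comm]
  · intro i _ hi
    have : ¬ ((i : ℕ) < d) := by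
      intro h
      exact hi (Finset.mem_map.mpr ⟨⟨(i : ℕ), h⟩, Finset.mem_univ _, Fin.ext rfl⟩)
    simp [this]

/-- Converse part of Fiedler's theorem: a real `N×N` matrix `A` such that
`I − AᵀA` is positive semidefinite of rank at most `M` embeds as the leading
principal block of an orthogonal `(N+M)×(N+M)` matrix. -/
theorem fiedler_orthogonal_completion {N M : ℕ}
    (A : Matrix (Fin N) (Fin N) ℝ)
    (hpsd : ((1 : Matrix (Fin N) (Fin N) ℝ) - Aᵀ * A).PosSemidef)
    (hrank : ((1 : Matrix (Fin N) (Fin N) ℝ) - Aᵀ * A).rank ≤ M) :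
    ∃ (B : Matrix (Fin N) (Fin M) ℝ) (C : Matrix (Fin M) (Fin N) ℝ)
      (D : Matrix (Fin M) (Fin M) ℝ),
      Matrix.fromBlocks A B C D * (Matrix.fromBlocks A B C D)ᵀ = 1 := by
  obtain ⟨C, hC⟩ := fiedler_aux_factor _ hpsd hrank
  let v : Fin N → EuclideanSpace ℝ (Fin N ⊕ Fin M) := fun j =>
    (WithLp.equiv 2 _).symm (Sum.elim (fun i => A i j) (fun k => C k j))
  have key : ∀ j k, (inner ℝ (v j) (v k) : ℝ) = if j = k then 1 else 0 := by
    intro j k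
    rw [PiLp.inner_apply]
    have : ∀ i : Fin N ⊕ Fin M, (inner ℝ (v j i) (v k i) : ℝ) =
        Sum.elim (fun a => A a j * A a k) (fun a => C a j * C a k) i := by
      intro i
      cases i <;> simp [v, RCLike.inner_apply, WithLp.equiv_symm_apply, PiLp.toLp_apply, mul_comm]
    rw [Finset.sum_congr rfl (fun i _ => this i), Fintype.sum_sum_type]
    simp only [Sum.elim_inl, Sum.elim_inr]
    have h1 : ∑ a : Fin N, A a j * A a k = (Aᵀ * A) j k := by
      simp [Matrix.mul_apply]
    have h2 : ∑ a : Fin M, C a j * C a k = (Cᵀ * C) j k := by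
      simp [Matrix.mul_apply]
    rw [h1, h2, hC]
    simp [Matrix.sub_apply, Matrix.one_apply]
  have hcard : Module.finrank ℝ (EuclideanSpace ℝ (Fin N ⊕ Fin M)) =
      Fintype.card (Fin N ⊕ Fin M) := by
    simp [finrank_euclideanSpace]
  set v' : (Fin N ⊕ Fin M) → EuclideanSpace ℝ (Fin N ⊕ Fin M) :=
    Sum.elim v (fun _ => 0) with hv'
  have hon : Orthonormal ℝ ((Set.range (Sum.inl : Fin N → Fin N ⊕ Fin M)).restrict v') := by
    rw [orthonormal_iff_ite]
    rintro ⟨x, hx⟩ ⟨y, hy⟩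
    obtain ⟨j, rfl⟩ := hx
    obtain ⟨k, rfl⟩ := hy
    simp only [Set.restrict_apply, hv', Sum.elim_inl]
    change inner ℝ (v j) (v k) = _
    rw [key j k]
    by_cases h : j = k
    · subst h; simp
    · have : (⟨Sum.inl j, j, rfl⟩ : Set.range (Sum.inl : Fin N → Fin N ⊕ Fin M)) ≠
          ⟨Sum.inl k, k, rfl⟩ := by
        simp [Subtype.ext_iff, h]
      simp [h, this]
  obtain ⟨b, hb⟩ := hon.exists_orthonormalBasis_extension_of_card_eq hcard
  have hbinl : ∀ j : Fin N, b (Sum.inl j) = v j := by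
    intro j
    have := hb (Sum.inl j) (Set.mem_range_self j)
    simpa [hv'] using this
  set Q : Matrix (Fin N ⊕ Fin M) (Fin N ⊕ Fin M) ℝ := Matrix.of fun i j => b j i with hQdef
  refine ⟨fun i m => Q (Sum.inl i) (Sum.inr m), C, fun m m' => Q (Sum.inr m) (Sum.inr m'), ?_⟩
  have hblocks : Matrix.fromBlocks A (fun i m => Q (Sum.inl i) (Sum.inr m)) C
      (fun m m' => Q (Sum.inr m) (Sum.inr m')) = Q := by
    ext i j
    cases i with
    | inl i =>
      cases j with
      | inl j =>
        show A i j = Q (Sum.inl i) (Sum.inl j)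
        simp only [hQdef, Matrix.of_apply, hbinl j]
        simp [v, WithLp.equiv_symm_apply, PiLp.toLp_apply]
      | inr m => rfl
    | inr m =>
      cases j with
      | inl j =>
        show C m j = Q (Sum.inr m) (Sum.inl j)
        simp only [hQdef, Matrix.of_apply, hbinl j]
        simp [v, WithLp.equiv_symm_apply, PiLp.toLp_apply]
      | inr m' => rfl
  rw [hblocks]
  have hQQ : Qᵀ * Q = 1 := by
    ext j k
    simp only [Matrix.mul_apply, Matrix.transpose_apply, hQdef, Matrix.of_apply]
    have : ∑ i, b j i * b k i = (inner ℝ (b j) (b k) : ℝ) := by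
      rw [PiLp.inner_apply]
      simp [RCLike.inner_apply, mul_comm]
    rw [this, orthonormal_iff_ite.mp b.orthonormal j k]
    simp [Matrix.one_apply]
  exact mul_eq_one_comm.mp hQQ
end

section
/- Let q, q̂ ∈ ℝ^N satisfy the strict interlacing q̂_1 < q_1 < q̂_2 < q_2 < ⋯ < q̂_N < q_N. Define 𝒜(x) = ∏_{k=1}^N (x − q_k), ℬ(x) = ∏_{k=1}^N (x − q̂_k), α_j = −𝒜(q̂_j)/ℬ′(q̂_j), and β_i = ℬ(q_i)/𝒜′(q_i). Then the N×N matrix U with entries u_{ij} = √(β_i α_j) / (q_i − q̂_j) is orthogonal: U Uᵀ = I. -/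
open Matrix Finset

private lemma lagrange_eval' {N : ℕ} (v : Fin N → ℝ) (hv : Function.Injective v)
    (P : Polynomial ℝ) (hdeg : P.degree < N) (x : ℝ) :
    P.eval x = ∑ j, P.eval (v j) * ((∏ k ∈ univ.erase j, (x - v k)) /
      ∏ k ∈ univ.erase j, (v j - v k)) := by
  have hinj : Set.InjOn v (univ : Finset (Fin N)) := fun a _ b _ h => hv h
  have hcard : (univ : Finset (Fin N)).card = N := by simp
  have h := Lagrange.eq_interpolate hinj (f := P) (by rw [hcard]; exact hdeg)
  conv_lhs => rw [h]
  rw [Lagrange.interpolate_apply, Polynomial.eval_finset_sum]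
  refine Finset.sum_congr rfl fun j _ => ?_
  rw [Polynomial.eval_mul, Polynomial.eval_C]
  congr 1
  rw [Lagrange.basis, Polynomial.eval_prod, ← Finset.prod_div_distrib]
  refine Finset.prod_congr rfl fun k hk => ?_
  rw [Lagrange.basisDivisor, Polynomial.eval_mul, Polynomial.eval_C,
    Polynomial.eval_sub, Polynomial.eval_X, Polynomial.eval_C]
  rw [inv_mul_eq_div]

private lemma key_identity' {N : ℕ} (q qh : Fin N → ℝ) (hqh : Function.Injective qh)
    (i l : Fin N) :
    ∏ k ∈ univ.erase i, (q l - q k) = ∑ j, (∏ k ∈ univ.erase i, (qh j - q k)) *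
      ((∏ k ∈ univ.erase j, (q l - qh k)) / ∏ k ∈ univ.erase j, (qh j - qh k)) := by
  set P : Polynomial ℝ := ∏ k ∈ univ.erase i, (Polynomial.X - Polynomial.C (q k)) with hP
  have hev : ∀ x : ℝ, P.eval x = ∏ k ∈ univ.erase i, (x - q k) := by
    intro x; rw [hP, Polynomial.eval_prod]; simp
  have hdeg : P.degree < N := by
    rw [hP, Polynomial.degree_prod]
    simp only [Polynomial.degree_X_sub_C]
    rw [Finset.sum_const, Finset.card_erase_of_mem (mem_univ i), Finset.card_univ,
      Fintype.card_fin]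
    have : ((N - 1 : ℕ) : WithBot ℕ) < (N : WithBot ℕ) := by
      exact_mod_cast Nat.sub_lt (Nat.pos_of_ne_zero (by rintro rfl; exact i.elim0)) one_pos
    simpa using this
  have h := lagrange_eval' qh hqh P hdeg (q l)
  rw [hev] at h
  rw [h]
  exact Finset.sum_congr rfl fun j _ => by rw [hev]

/-- Orthogonality of the Cauchy-like matrix built from strictly interlaced nodes:
with `q̂_1 < q_1 < q̂_2 < q_2 < ⋯ < q̂_N < q_N`,
`α_j = −𝒜(q̂_j)/ℬ′(q̂_j)`, `β_i = ℬ(q_i)/𝒜′(q_i)`, the matrix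
`U = (√(β_i α_j)/(q_i − q̂_j))_{ij}` satisfies `U Uᵀ = I`. -/
theorem interlaced_cauchy_like_orthogonal {N : ℕ} (q qh : Fin N → ℝ)
    (h1 : ∀ i, qh i < q i)
    (h2 : ∀ i j : Fin N, i < j → q i < qh j) :
    (Matrix.of fun i j : Fin N =>
        Real.sqrt
          (((∏ k, (q i - qh k)) / ∏ k ∈ Finset.univ.erase i, (q i - q k)) *
           (-(∏ k, (qh j - q k)) / ∏ k ∈ Finset.univ.erase j, (qh j - qh k))) /
        (q i - qh j)) *
      (Matrix.of fun i j : Fin N =>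
        Real.sqrt
          (((∏ k, (q i - qh k)) / ∏ k ∈ Finset.univ.erase i, (q i - q k)) *
           (-(∏ k, (qh j - q k)) / ∏ k ∈ Finset.univ.erase j, (qh j - qh k))) /
        (q i - qh j))ᵀ = 1 := by
  -- order facts
  have hqhmono : StrictMono qh := fun a b hab => (h1 a).trans (h2 a b hab)
  have hqmono : StrictMono q := fun a b hab => (h2 a b hab).trans (h1 b)
  have hqinj : Function.Injective q := hqmono.injective
  have hqhinj : Function.Injective qh := hqhmono.injective
  have hpos : ∀ i j : Fin N, j ≤ i → 0 < q i - qh j := by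
    intro i j h
    rcases eq_or_lt_of_le h with rfl | h
    · exact sub_pos.mpr (h1 _)
    · exact sub_pos.mpr ((hqhmono h).trans (h1 i))
  have hneg : ∀ i j : Fin N, i < j → q i - qh j < 0 := fun i j h => sub_neg.mpr (h2 i j h)
  have hne : ∀ i j : Fin N, q i - qh j ≠ 0 := by
    intro i j
    rcases le_or_gt j i with h | h
    · exact (hpos i j h).ne'
    · exact (hneg i j h).ne
  set bet : Fin N → ℝ := fun i =>
    (∏ k, (q i - qh k)) / ∏ k ∈ Finset.univ.erase i, (q i - q k) with hbetdef
  set alp : Fin N → ℝ := fun j =>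
    -(∏ k, (qh j - q k)) / ∏ k ∈ Finset.univ.erase j, (qh j - qh k) with halpdef
  have hbet : ∀ i, 0 < bet i := by
    intro i
    have : bet i = (q i - qh i) * ∏ k ∈ univ.erase i, ((q i - qh k) / (q i - q k)) := by
      simp only [hbetdef]
      rw [← Finset.mul_prod_erase _ (fun k => q i - qh k) (mem_univ i), mul_div_assoc,
        ← Finset.prod_div_distrib]
    rw [this]
    refine mul_pos (sub_pos.mpr (h1 i)) (Finset.prod_pos fun k hk => ?_)
    rcases lt_or_gt_of_ne (Finset.ne_of_mem_erase hk) with h | h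
    · exact div_pos (hpos i k h.le) (sub_pos.mpr (hqmono h))
    · exact div_pos_iff.mpr (Or.inr ⟨hneg i k h, sub_neg.mpr (hqmono h)⟩)
  have halp : ∀ j, 0 < alp j := by
    intro j
    have : alp j = (q j - qh j) * ∏ k ∈ univ.erase j, ((qh j - q k) / (qh j - qh k)) := by
      simp only [halpdef]
      rw [← Finset.mul_prod_erase _ (fun k => qh j - q k) (mem_univ j), neg_mul_eq_neg_mul,
        neg_sub, mul_div_assoc, ← Finset.prod_div_distrib]
    rw [this]
    refine mul_pos (sub_pos.mpr (h1 j)) (Finset.prod_pos fun k hk => ?_)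
    rcases lt_or_gt_of_ne (Finset.ne_of_mem_erase hk) with h | h
    · exact div_pos (sub_pos.mpr (h2 k j h)) (sub_pos.mpr (hqhmono h))
    · have hn1 : qh j - q k < 0 := sub_neg.mpr ((hqhmono h).trans (h1 k))
      exact div_pos_iff.mpr (Or.inr ⟨hn1, sub_neg.mpr (hqhmono h)⟩)
  have hE : ∀ j : Fin N, (∏ k ∈ univ.erase j, (qh j - qh k)) ≠ 0 :=
    fun j => Finset.prod_ne_zero_iff.mpr fun k hk =>
      sub_ne_zero.mpr (hqhinj.ne (Finset.ne_of_mem_erase hk).symm)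
  have hD : ∀ i : Fin N, (∏ k ∈ univ.erase i, (q i - q k)) ≠ 0 :=
    fun i => Finset.prod_ne_zero_iff.mpr fun k hk =>
      sub_ne_zero.mpr (hqinj.ne (Finset.ne_of_mem_erase hk).symm)
  have hB : ∀ l : Fin N, (∏ k, (q l - qh k)) ≠ 0 :=
    fun l => Finset.prod_ne_zero_iff.mpr fun k _ => hne l k
  -- key summation identity
  have SUM : ∀ i l : Fin N, ∑ j, alp j / ((q i - qh j) * (q l - qh j)) =
      (∏ k ∈ univ.erase i, (q l - q k)) / ∏ k, (q l - qh k) := by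
    intro i l
    rw [eq_div_iff (hB l), Finset.sum_mul, key_identity' q qh hqhinj i l]
    refine Finset.sum_congr rfl fun j _ => ?_
    have e1 : (∏ k, (qh j - q k)) = (qh j - q i) * ∏ k ∈ univ.erase i, (qh j - q k) :=
      (Finset.mul_prod_erase _ _ (mem_univ i)).symm
    have e2 : (∏ k, (q l - qh k)) = (q l - qh j) * ∏ k ∈ univ.erase j, (q l - qh k) :=
      (Finset.mul_prod_erase _ _ (mem_univ j)).symm
    rw [halpdef]
    simp only []
    rw [e1, e2]
    have h1' : q i - qh j ≠ 0 := hne i j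
    have h2' : q l - qh j ≠ 0 := hne l j
    have h3' := hE j
    field_simp
    ring
  ext i l
  rw [Matrix.mul_apply, Matrix.one_apply]
  simp only [Matrix.of_apply, Matrix.transpose_apply]
  have hterm : ∀ j, Real.sqrt (bet i * alp j) / (q i - qh j) *
      (Real.sqrt (bet l * alp j) / (q l - qh j)) =
      Real.sqrt (bet i) * Real.sqrt (bet l) * (alp j / ((q i - qh j) * (q l - qh j))) := by
    intro j
    rw [Real.sqrt_mul (hbet i).le, Real.sqrt_mul (hbet l).le, div_mul_div_comm,
      show Real.sqrt (bet i) * Real.sqrt (alp j) * (Real.sqrt (bet l) * Real.sqrt (alp j))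
        = Real.sqrt (bet i) * Real.sqrt (bet l) * (Real.sqrt (alp j) * Real.sqrt (alp j))
        from by ring,
      Real.mul_self_sqrt (halp j).le, mul_div_assoc]
  calc (∑ j, Real.sqrt (bet i * alp j) / (q i - qh j) *
        (Real.sqrt (bet l * alp j) / (q l - qh j)))
      = ∑ j, Real.sqrt (bet i) * Real.sqrt (bet l) *
          (alp j / ((q i - qh j) * (q l - qh j))) := Finset.sum_congr rfl fun j _ => hterm j
    _ = Real.sqrt (bet i) * Real.sqrt (bet l) *
          ((∏ k ∈ univ.erase i, (q l - q k)) / ∏ k, (q l - qh k)) := by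
        rw [← Finset.mul_sum, SUM i l]
    _ = if i = l then 1 else 0 := by
        by_cases h : i = l
        · subst h
          rw [if_pos rfl, Real.mul_self_sqrt (hbet i).le]
          simp only [hbetdef]
          rw [div_mul_div_comm, div_eq_one_iff_eq (mul_ne_zero (hD i) (hB i)), mul_comm]
        · rw [if_neg h]
          have : (∏ k ∈ univ.erase i, (q l - q k)) = 0 :=
            Finset.prod_eq_zero (Finset.mem_erase.mpr ⟨Ne.symm h, mem_univ l⟩) (sub_self _)
          rw [this, zero_div, mul_zero]
end

section
/- Let U be a real orthogonal N×N matrix (U Uᵀ = I), let r > 0 be a real number, let m be a delay vector, and let Γ be the diagonal matrix with diagonal entries r^{m_1},…,r^{m_N}. Then every complex number z with det(diagonal(z^{m_1},…,z^{m_N}) − UΓ) = 0 satisfies |z| = r. -/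
open Matrix

/-- Homogeneous decay: for an orthogonal `U`, decay rate `r > 0`, delay vector `m`
and absorption matrix `Γ = diagonal(r^{m_i})`, every root of
`det(diagonal(z^{m_i}) − UΓ)` has modulus exactly `r`. -/
theorem homogeneous_decay_poles {N : ℕ}
    (U : Matrix (Fin N) (Fin N) ℝ) (hU : U * Uᵀ = 1)
    (r : ℝ) (hr : 0 < r)
    (m : Fin N → ℕ) (hm : ∀ i, 1 ≤ m i) :
    ∀ z : ℂ,
      (Matrix.diagonal (fun i => z ^ m i) -
          (U * Matrix.diagonal fun i => r ^ m i).map Complex.ofReal).det = 0 →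
      ‖z‖ = r := by
  intro z hz
  have hrC : (r : ℂ) ≠ 0 := Complex.ofReal_ne_zero.mpr hr.ne'
  set A : Matrix (Fin N) (Fin N) ℂ := U.map Complex.ofReal with hA
  set w : ℂ := z / (r : ℂ) with hw
  -- unitarity of A
  have hAH : Aᴴ = Uᵀ.map Complex.ofReal := by
    ext i j
    simp [hA, Matrix.conjTranspose_apply, Matrix.transpose_apply]
  have hunit : Aᴴ * A = 1 := by
    rw [mul_eq_one_comm]
    rw [hAH, hA]
    have : (U * Uᵀ).map Complex.ofRealHom = U.map Complex.ofRealHom * Uᵀ.map Complex.ofRealHom :=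
      Matrix.map_mul
    rw [show ⇑Complex.ofRealHom = (Complex.ofReal : ℝ → ℂ) from rfl] at this
    rw [← this, hU]
    simp [Matrix.map_one]
  -- rewrite the matrix and factor the determinant
  have hmap : (U * Matrix.diagonal fun i => r ^ m i).map Complex.ofReal
      = A * Matrix.diagonal (fun i => (r : ℂ) ^ m i) := by
    have : (U * Matrix.diagonal fun i => r ^ m i).map Complex.ofRealHom
        = U.map Complex.ofRealHom * (Matrix.diagonal fun i => r ^ m i).map Complex.ofRealHom :=
      Matrix.map_mul
    rw [show ⇑Complex.ofRealHom = (Complex.ofReal : ℝ → ℂ) from rfl] at this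
    rw [this, hA]
    congr 1
    ext i j
    by_cases h : i = j <;> simp [Matrix.diagonal, h]
  have hfac : Matrix.diagonal (fun i => z ^ m i) - A * Matrix.diagonal (fun i => (r : ℂ) ^ m i)
      = (Matrix.diagonal (fun i => w ^ m i) - A) * Matrix.diagonal (fun i => (r : ℂ) ^ m i) := by
    rw [Matrix.sub_mul, Matrix.diagonal_mul_diagonal]
    congr 1
    ext i j
    by_cases h : i = j
    · subst h
      simp [hw, div_pow, div_mul_cancel₀ _ (pow_ne_zero _ hrC)]
    · simp [Matrix.diagonal, h]
  rw [hmap, hfac, Matrix.det_mul, Matrix.det_diagonal] at hz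
  have hprod : ∏ i, (r : ℂ) ^ m i ≠ 0 :=
    Finset.prod_ne_zero_iff.mpr fun i _ => pow_ne_zero _ hrC
  have hdet : (Matrix.diagonal (fun i => w ^ m i) - A).det = 0 := by
    rcases mul_eq_zero.mp hz with h | h
    · exact h
    · exact absurd h hprod
  -- get an eigenvector
  obtain ⟨v, hv0, hv⟩ := (Matrix.exists_mulVec_eq_zero_iff).mpr hdet
  have hAv : A *ᵥ v = fun i => w ^ m i * v i := by
    have := hv
    rw [Matrix.sub_mulVec, sub_eq_zero] at this
    rw [← this]
    ext i
    simp [Matrix.mulVec_diagonal]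
  -- norm preservation
  have hkey : star (A *ᵥ v) ⬝ᵥ (A *ᵥ v) = star v ⬝ᵥ v := by
    rw [Matrix.star_mulVec, Matrix.dotProduct_mulVec, Matrix.vecMul_vecMul, hunit,
      Matrix.vecMul_one]
  have hsumC : ∑ i, (Complex.normSq (w ^ m i * v i) : ℂ) = ∑ i, (Complex.normSq (v i) : ℂ) := by
    have : ∑ i, star ((A *ᵥ v) i) * (A *ᵥ v) i = ∑ i, star (v i) * v i := hkey
    rw [hAv] at this
    calc ∑ i, (Complex.normSq (w ^ m i * v i) : ℂ)
        = ∑ i, star (w ^ m i * v i) * (w ^ m i * v i) := by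
          refine Finset.sum_congr rfl fun i _ => ?_
          rw [Complex.star_def, ← Complex.normSq_eq_conj_mul_self]
      _ = ∑ i, star (v i) * v i := this
      _ = ∑ i, (Complex.normSq (v i) : ℂ) := by
          refine Finset.sum_congr rfl fun i _ => ?_
          rw [Complex.star_def, ← Complex.normSq_eq_conj_mul_self]
  have hsum : ∑ i, (Complex.normSq w) ^ m i * Complex.normSq (v i)
      = ∑ i, Complex.normSq (v i) := by
    have h2 : ((∑ i, (Complex.normSq w) ^ m i * Complex.normSq (v i) : ℝ) : ℂ)
        = ((∑ i, Complex.normSq (v i) : ℝ) : ℂ) := by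
      push_cast
      simpa [Complex.normSq_mul, map_pow] using hsumC
    exact_mod_cast h2
  -- conclude normSq w = 1
  set t : ℝ := Complex.normSq w with ht
  have ht0 : 0 ≤ t := Complex.normSq_nonneg w
  obtain ⟨i₀, hi₀⟩ := Function.ne_iff.mp hv0
  have hs0 : 0 < Complex.normSq (v i₀) := Complex.normSq_pos.mpr hi₀
  have htone : t = 1 := by
    rcases lt_trichotomy t 1 with h | h | h
    · exfalso
      have : ∑ i, t ^ m i * Complex.normSq (v i) < ∑ i, Complex.normSq (v i) := by
        refine Finset.sum_lt_sum (fun i _ => ?_) ⟨i₀, Finset.mem_univ _, ?_⟩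
        · calc t ^ m i * Complex.normSq (v i) ≤ 1 * Complex.normSq (v i) :=
                mul_le_mul_of_nonneg_right (pow_le_one₀ ht0 h.le) (Complex.normSq_nonneg _)
          _ = Complex.normSq (v i) := one_mul _
        · calc t ^ m i₀ * Complex.normSq (v i₀) < 1 * Complex.normSq (v i₀) := by
                exact mul_lt_mul_of_pos_right
                  (pow_lt_one₀ ht0 h (Nat.one_le_iff_ne_zero.mp (hm i₀))) hs0
          _ = Complex.normSq (v i₀) := one_mul _
      exact absurd hsum this.ne
    · exact h
    · exfalso
      have : ∑ i, Complex.normSq (v i) < ∑ i, t ^ m i * Complex.normSq (v i) := by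
        refine Finset.sum_lt_sum (fun i _ => ?_) ⟨i₀, Finset.mem_univ _, ?_⟩
        · calc Complex.normSq (v i) = 1 * Complex.normSq (v i) := (one_mul _).symm
          _ ≤ t ^ m i * Complex.normSq (v i) :=
                mul_le_mul_of_nonneg_right (one_le_pow₀ h.le) (Complex.normSq_nonneg _)
        · calc Complex.normSq (v i₀) = 1 * Complex.normSq (v i₀) := (one_mul _).symm
          _ < t ^ m i₀ * Complex.normSq (v i₀) := by
                exact mul_lt_mul_of_pos_right
                  (one_lt_pow₀ h (Nat.one_le_iff_ne_zero.mp (hm i₀))) hs0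
      exact absurd hsum this.ne'
  have habsw : ‖w‖ = 1 := by
    have h2 : ‖w‖ ^ 2 = 1 := by rw [Complex.sq_norm, ← ht, htone]
    nlinarith [norm_nonneg w]
  have : ‖z‖ / r = 1 := by
    rw [hw] at habsw
    rwa [norm_div, Complex.norm_real, Real.norm_eq_abs, abs_of_pos hr] at habsw
  field_simp at this
  exact this
end

section
/- Let N ≥ 1 and let g_1,…,g_N be real numbers with |g_i| < 1 for all i. Define the real N×N matrix A by A_{ii} = −g_i, A_{ij} = 0 for i < j, and A_{ij} = (1 − g_j²)·∏_{k=j+1}^{i−1} g_k for i > j; the vector b ∈ ℝ^N by b_i = ∏_{k=1}^{i−1} g_k; the vector c ∈ ℝ^N by c_i = (1 − g_i²)·∏_{k=i+1}^{N} g_k; and the scalar d = ∏_{k=1}^{N} g_k. Let Q be the diagonal matrix with diagonal entries 1/(1 − g_i²). Then Q is positive definite and A Q Aᵀ + b bᵀ = Q, A Q c + b d = 0, and cᵀ Q c + d² = 1. -/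
open Matrix Finset

private lemma tele_aux {α : Type*} [LinearOrder α] (h : α → ℝ) (s : Finset α) :
    ∑ m ∈ s, (1 - h m) * ∏ k ∈ s.filter (fun k => m < k), h k = 1 - ∏ k ∈ s, h k := by
  classical
  induction s using Finset.induction_on_min with
  | empty => simp
  | insert a t ha ih =>
    have hat : a ∉ t := fun h' => lt_irrefl a (ha a h')
    have h1 : (insert a t).filter (fun k => a < k) = t := by
      ext x
      simp only [Finset.mem_filter, Finset.mem_insert]
      constructor
      · rintro ⟨hx | hx, hlt⟩
        · exact absurd hlt (by simp [hx])
        · exact hx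
      · exact fun hx => ⟨Or.inr hx, ha x hx⟩
    have h2 : ∀ m ∈ t, (insert a t).filter (fun k => m < k) = t.filter (fun k => m < k) := by
      intro m hm
      ext x
      simp only [Finset.mem_filter, Finset.mem_insert]
      constructor
      · rintro ⟨hx | hx, hlt⟩
        · subst hx; exact absurd hlt (not_lt.mpr (ha m hm).le)
        · exact ⟨hx, hlt⟩
      · exact fun ⟨hx, hlt⟩ => ⟨Or.inr hx, hlt⟩
    rw [Finset.sum_insert hat, Finset.prod_insert hat, h1,
      Finset.sum_congr rfl (fun m hm => by rw [h2 m hm]), ih]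
    ring

private lemma filter_Iio {N : ℕ} (m i : Fin N) :
    (Finset.Iio i).filter (fun k => m < k) = Finset.Ioo m i := by
  ext x
  simp only [Finset.mem_filter, Finset.mem_Iio, Finset.mem_Ioo]
  tauto

private lemma filter_univ {N : ℕ} (i : Fin N) :
    Finset.univ.filter (fun k => i < k) = Finset.Ioi i := by
  ext x
  simp

private lemma prod_split_Iio {N : ℕ} (f : Fin N → ℝ) {j i : Fin N} (h : j < i) :
    ∏ k ∈ Finset.Iio i, f k
      = (∏ k ∈ Finset.Iio j, f k) * (f j * ∏ k ∈ Finset.Ioo j i, f k) := by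
  have h' : j.val < i.val := h
  have hset : Finset.Iio i = Finset.Iio j ∪ Finset.Ico j i := by
    ext x
    simp only [Finset.mem_Iio, Finset.mem_union, Finset.mem_Ico, Fin.lt_def, Fin.le_def]
    omega
  have hd : Disjoint (Finset.Iio j) (Finset.Ico j i) := by
    rw [Finset.disjoint_left]
    intro x hx hx'
    simp only [Finset.mem_Iio] at hx
    simp only [Finset.mem_Ico] at hx'
    exact absurd hx'.1 (not_le.mpr hx)
  rw [hset, Finset.prod_union hd, ← Finset.Ioo_insert_left h, Finset.prod_insert (by simp)]

private lemma prod_split_Ioo {N : ℕ} (f : Fin N → ℝ) {m j i : Fin N} (h1 : m < j) (h2 : j < i) :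
    ∏ k ∈ Finset.Ioo m i, f k
      = (∏ k ∈ Finset.Ioo m j, f k) * (f j * ∏ k ∈ Finset.Ioo j i, f k) := by
  have h1' : m.val < j.val := h1
  have h2' : j.val < i.val := h2
  have hset : Finset.Ioo m i = Finset.Ioo m j ∪ Finset.Ico j i := by
    ext x
    simp only [Finset.mem_Ioo, Finset.mem_union, Finset.mem_Ico, Fin.lt_def, Fin.le_def]
    omega
  have hd : Disjoint (Finset.Ioo m j) (Finset.Ico j i) := by
    rw [Finset.disjoint_left]
    intro x hx hx'
    simp only [Finset.mem_Ioo] at hx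
    simp only [Finset.mem_Ico] at hx'
    exact absurd hx'.1 (not_le.mpr hx.2)
  rw [hset, Finset.prod_union hd, ← Finset.Ioo_insert_left h2, Finset.prod_insert (by simp)]

private lemma prod_split_Ioi {N : ℕ} (f : Fin N → ℝ) {m i : Fin N} (h : m < i) :
    ∏ k ∈ Finset.Ioi m, f k
      = (∏ k ∈ Finset.Ioo m i, f k) * (f i * ∏ k ∈ Finset.Ioi i, f k) := by
  have h' : m.val < i.val := h
  have hset : Finset.Ioi m = Finset.Ioo m i ∪ Finset.Ici i := by
    ext x
    simp only [Finset.mem_Ioi, Finset.mem_union, Finset.mem_Ioo, Finset.mem_Ici,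
      Fin.lt_def, Fin.le_def]
    omega
  have hd : Disjoint (Finset.Ioo m i) (Finset.Ici i) := by
    rw [Finset.disjoint_left]
    intro x hx hx'
    simp only [Finset.mem_Ioo] at hx
    simp only [Finset.mem_Ici] at hx'
    exact absurd hx' (not_le.mpr hx.2)
  rw [hset, Finset.prod_union hd, ← Finset.Ioi_insert i, Finset.prod_insert (by simp)]

private lemma prod_split_univ {N : ℕ} (f : Fin N → ℝ) (i : Fin N) :
    ∏ k, f k = (∏ k ∈ Finset.Iio i, f k) * (f i * ∏ k ∈ Finset.Ioi i, f k) := by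
  have hset : (Finset.univ : Finset (Fin N)) = Finset.Iio i ∪ Finset.Ici i := by
    ext x
    simp only [Finset.mem_univ, Finset.mem_union, Finset.mem_Iio, Finset.mem_Ici,
      Fin.lt_def, Fin.le_def, true_iff]
    omega
  have hd : Disjoint (Finset.Iio i) (Finset.Ici i) := by
    rw [Finset.disjoint_left]
    intro x hx hx'
    simp only [Finset.mem_Iio] at hx
    simp only [Finset.mem_Ici] at hx'
    exact absurd hx' (not_le.mpr hx)
  rw [hset, Finset.prod_union hd, ← Finset.Ioi_insert i, Finset.prod_insert (by simp)]

private lemma key1 {N : ℕ} (g : Fin N → ℝ) (hs : ∀ m : Fin N, 1 - g m ^ 2 ≠ 0)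
    {i j : Fin N} (hji : j ≤ i) :
    ∑ m : Fin N,
        ((if i = m then -g i else if m < i then (1 - g m ^ 2) * ∏ k ∈ Finset.Ioo m i, g k else 0)
          * (1 / (1 - g m ^ 2)))
        * (if j = m then -g j else if m < j then (1 - g m ^ 2) * ∏ k ∈ Finset.Ioo m j, g k else 0)
      + (∏ k ∈ Finset.Iio i, g k) * (∏ k ∈ Finset.Iio j, g k)
      = if i = j then 1 / (1 - g i ^ 2) else 0 := by
  have hrestrict :
      (∑ m : Fin N,
        ((if i = m then -g i else if m < i then (1 - g m ^ 2) * ∏ k ∈ Finset.Ioo m i, g k else 0)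
          * (1 / (1 - g m ^ 2)))
        * (if j = m then -g j else if m < j then (1 - g m ^ 2) * ∏ k ∈ Finset.Ioo m j, g k else 0))
      = ∑ m ∈ Finset.Iic j,
        ((if i = m then -g i else if m < i then (1 - g m ^ 2) * ∏ k ∈ Finset.Ioo m i, g k else 0)
          * (1 / (1 - g m ^ 2)))
        * (if j = m then -g j else if m < j then (1 - g m ^ 2) * ∏ k ∈ Finset.Ioo m j, g k else 0) := by
    refine (Finset.sum_subset (Finset.subset_univ _) ?_).symm
    intro m _ hm
    rw [Finset.mem_Iic] at hm
    have h1 : j ≠ m := fun e => hm (le_of_eq e.symm)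
    have h2 : ¬ m < j := fun h' => hm h'.le
    simp [h1, h2]
  rw [hrestrict, ← Finset.Iio_insert, Finset.sum_insert (by simp)]
  rcases eq_or_lt_of_le hji with rfl | hlt
  · -- case i = j
    have e : ∀ m ∈ Finset.Iio j,
        ((if j = m then -g j else if m < j then (1 - g m ^ 2) * ∏ k ∈ Finset.Ioo m j, g k else 0)
          * (1 / (1 - g m ^ 2)))
        * (if j = m then -g j else if m < j then (1 - g m ^ 2) * ∏ k ∈ Finset.Ioo m j, g k else 0)
        = (1 - g m ^ 2) * ∏ k ∈ (Finset.Iio j).filter (fun k => m < k), g k ^ 2 := by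
      intro m hm
      rw [Finset.mem_Iio] at hm
      have h0 := hs m
      rw [filter_Iio, Finset.prod_pow, if_neg hm.ne', if_pos hm]
      field_simp
    have h0 := hs j
    rw [Finset.sum_congr rfl e, tele_aux, if_pos rfl, if_pos rfl,
      Finset.prod_pow]
    field_simp
    ring
  · -- case j < i
    have e : ∀ m ∈ Finset.Iio j,
        ((if i = m then -g i else if m < i then (1 - g m ^ 2) * ∏ k ∈ Finset.Ioo m i, g k else 0)
          * (1 / (1 - g m ^ 2)))
        * (if j = m then -g j else if m < j then (1 - g m ^ 2) * ∏ k ∈ Finset.Ioo m j, g k else 0)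
        = ((1 - g m ^ 2) * ∏ k ∈ (Finset.Iio j).filter (fun k => m < k), g k ^ 2)
            * (g j * ∏ k ∈ Finset.Ioo j i, g k) := by
      intro m hm
      rw [Finset.mem_Iio] at hm
      have hmi : m < i := hm.trans hlt
      have h0 := hs m
      rw [filter_Iio, Finset.prod_pow, if_neg hmi.ne', if_pos hmi, if_neg hm.ne', if_pos hm,
        prod_split_Ioo g hm hlt]
      field_simp
    have h0 := hs j
    rw [Finset.sum_congr rfl e, ← Finset.sum_mul, tele_aux, if_pos rfl, if_neg hlt.ne',
      if_pos hlt, if_neg hlt.ne', prod_split_Iio g hlt, Finset.prod_pow]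
    field_simp
    ring

private lemma key1_full {N : ℕ} (g : Fin N → ℝ) (hs : ∀ m : Fin N, 1 - g m ^ 2 ≠ 0)
    (i j : Fin N) :
    ∑ m : Fin N,
        ((if i = m then -g i else if m < i then (1 - g m ^ 2) * ∏ k ∈ Finset.Ioo m i, g k else 0)
          * (1 / (1 - g m ^ 2)))
        * (if j = m then -g j else if m < j then (1 - g m ^ 2) * ∏ k ∈ Finset.Ioo m j, g k else 0)
      + (∏ k ∈ Finset.Iio i, g k) * (∏ k ∈ Finset.Iio j, g k)
      = if i = j then 1 / (1 - g i ^ 2) else 0 := by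
  rcases le_or_gt j i with h | h
  · exact key1 g hs h
  · have h2 := key1 g hs h.le
    rw [if_neg h.ne'] at h2
    rw [if_neg h.ne]
    rw [Finset.sum_congr rfl (fun m _ => by ring :
      ∀ m ∈ (Finset.univ : Finset (Fin N)),
        ((if i = m then -g i else if m < i then (1 - g m ^ 2) * ∏ k ∈ Finset.Ioo m i, g k else 0)
          * (1 / (1 - g m ^ 2)))
        * (if j = m then -g j else if m < j then (1 - g m ^ 2) * ∏ k ∈ Finset.Ioo m j, g k else 0)
        = ((if j = m then -g j else if m < j then (1 - g m ^ 2) * ∏ k ∈ Finset.Ioo m j, g k else 0)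
          * (1 / (1 - g m ^ 2)))
        * (if i = m then -g i else if m < i then (1 - g m ^ 2) * ∏ k ∈ Finset.Ioo m i, g k else 0)),
      mul_comm (∏ k ∈ Finset.Iio i, g k)]
    exact h2

private lemma key2 {N : ℕ} (g : Fin N → ℝ) (hs : ∀ m : Fin N, 1 - g m ^ 2 ≠ 0) (i : Fin N) :
    ∑ m : Fin N,
        ((if i = m then -g i else if m < i then (1 - g m ^ 2) * ∏ k ∈ Finset.Ioo m i, g k else 0)
          * (1 / (1 - g m ^ 2)))
        * ((1 - g m ^ 2) * ∏ k ∈ Finset.Ioi m, g k)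
      + (∏ k, g k) * (∏ k ∈ Finset.Iio i, g k) = 0 := by
  have hrestrict :
      (∑ m : Fin N,
        ((if i = m then -g i else if m < i then (1 - g m ^ 2) * ∏ k ∈ Finset.Ioo m i, g k else 0)
          * (1 / (1 - g m ^ 2)))
        * ((1 - g m ^ 2) * ∏ k ∈ Finset.Ioi m, g k))
      = ∑ m ∈ Finset.Iic i,
        ((if i = m then -g i else if m < i then (1 - g m ^ 2) * ∏ k ∈ Finset.Ioo m i, g k else 0)
          * (1 / (1 - g m ^ 2)))
        * ((1 - g m ^ 2) * ∏ k ∈ Finset.Ioi m, g k) := by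
    refine (Finset.sum_subset (Finset.subset_univ _) ?_).symm
    intro m _ hm
    rw [Finset.mem_Iic] at hm
    have h1 : i ≠ m := fun e => hm (le_of_eq e.symm)
    have h2 : ¬ m < i := fun h' => hm h'.le
    simp [h1, h2]
  rw [hrestrict, ← Finset.Iio_insert, Finset.sum_insert (by simp)]
  have e : ∀ m ∈ Finset.Iio i,
      ((if i = m then -g i else if m < i then (1 - g m ^ 2) * ∏ k ∈ Finset.Ioo m i, g k else 0)
        * (1 / (1 - g m ^ 2)))
      * ((1 - g m ^ 2) * ∏ k ∈ Finset.Ioi m, g k)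
      = ((1 - g m ^ 2) * ∏ k ∈ (Finset.Iio i).filter (fun k => m < k), g k ^ 2)
          * (g i * ∏ k ∈ Finset.Ioi i, g k) := by
    intro m hm
    rw [Finset.mem_Iio] at hm
    have h0 := hs m
    rw [filter_Iio, Finset.prod_pow, if_neg hm.ne', if_pos hm, prod_split_Ioi g hm]
    field_simp
  have h0 := hs i
  rw [Finset.sum_congr rfl e, ← Finset.sum_mul, tele_aux, if_pos rfl,
    prod_split_univ g i, Finset.prod_pow]
  field_simp
  ring

private lemma key3 {N : ℕ} (g : Fin N → ℝ) (hs : ∀ m : Fin N, 1 - g m ^ 2 ≠ 0) :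
    ∑ m : Fin N,
        ((1 - g m ^ 2) * ∏ k ∈ Finset.Ioi m, g k)
        * ((1 / (1 - g m ^ 2)) * ((1 - g m ^ 2) * ∏ k ∈ Finset.Ioi m, g k))
      + (∏ k, g k) ^ 2 = 1 := by
  have e : ∀ m ∈ (Finset.univ : Finset (Fin N)),
      ((1 - g m ^ 2) * ∏ k ∈ Finset.Ioi m, g k)
        * ((1 / (1 - g m ^ 2)) * ((1 - g m ^ 2) * ∏ k ∈ Finset.Ioi m, g k))
      = (1 - g m ^ 2) * ∏ k ∈ Finset.univ.filter (fun k => m < k), g k ^ 2 := by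
    intro m _
    have h0 := hs m
    rw [filter_univ, Finset.prod_pow]
    field_simp
  rw [Finset.sum_congr rfl e, tele_aux, Finset.prod_pow]
  ring

/-- The delay state-space realization of a series of `N` Schroeder allpass filters
with gains `g_1,…,g_N` satisfies the SISO uniallpass condition with the diagonal
positive definite matrix `Q = diagonal (1/(1 − g_i²))`. -/
theorem schroeder_series_uniallpass {N : ℕ} (hN : 1 ≤ N)
    (g : Fin N → ℝ) (hg : ∀ i, |g i| < 1) :
    let A : Matrix (Fin N) (Fin N) ℝ := Matrix.of fun i j =>
      if i = j then -g i
      else if j < i then (1 - g j ^ 2) * ∏ k ∈ Finset.Ioo j i, g k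
      else 0
    let b : Fin N → ℝ := fun i => ∏ k ∈ Finset.Iio i, g k
    let c : Fin N → ℝ := fun i => (1 - g i ^ 2) * ∏ k ∈ Finset.Ioi i, g k
    let d : ℝ := ∏ k, g k
    let Q : Matrix (Fin N) (Fin N) ℝ := Matrix.diagonal fun i => 1 / (1 - g i ^ 2)
    Q.PosDef ∧
    A * Q * Aᵀ + Matrix.vecMulVec b b = Q ∧
    (A * Q) *ᵥ c + d • b = 0 ∧
    c ⬝ᵥ (Q *ᵥ c) + d ^ 2 = 1 := by
  intro A b c d Q
  have hpos : ∀ m : Fin N, (0:ℝ) < 1 - g m ^ 2 := by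
    intro m
    have := abs_lt.mp (hg m)
    nlinarith
  have hs : ∀ m : Fin N, (1:ℝ) - g m ^ 2 ≠ 0 := fun m => (hpos m).ne'
  have hAQ : A * Q = Matrix.of (fun i m =>
      (if i = m then -g i else if m < i then (1 - g m ^ 2) * ∏ k ∈ Finset.Ioo m i, g k else 0)
        * (1 / (1 - g m ^ 2))) := by
    ext i m
    simp [A, Q, Matrix.mul_diagonal]
  refine ⟨?_, ?_, ?_, ?_⟩
  · simp only [Q]
    rw [Matrix.posDef_diagonal_iff]
    exact fun i => div_pos one_pos (hpos i)
  · rw [hAQ]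
    ext i j
    simp only [A, b, Q, Matrix.add_apply, Matrix.mul_apply,
      Matrix.transpose_apply, Matrix.vecMulVec_apply, Matrix.of_apply, Matrix.diagonal_apply]
    exact key1_full g hs i j
  · ext i
    simp only [A, b, c, d, Q, Pi.add_apply, Pi.smul_apply, Pi.zero_apply, smul_eq_mul,
      Matrix.mulVec, dotProduct, Matrix.mul_diagonal, Matrix.of_apply]
    exact key2 g hs i
  · simp only [c, d, Q, dotProduct, Matrix.mulVec, Matrix.mul_diagonal,
      Matrix.diagonal_apply, Matrix.of_apply]
    have := key3 g hs
    simpa [Matrix.mulVec_diagonal] using this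
end

section
/- Let U be a real orthogonal N×N matrix (U Uᵀ = I) and let g be a real number with |g| < 1. Define A = −g·U, B = (1+g)·I, C = (1−g)·U, D = g·I, and Q = ((1+g)/(1−g))·I. Then Q is diagonal positive definite and A Q Aᵀ + B Bᵀ = Q, A Q Cᵀ + B Dᵀ = 0, and C Q Cᵀ + D Dᵀ = I. -/
open Matrix

/-- Poletti's unitary reverberator `A = −gU`, `B = (1+g)I`, `C = (1−g)U`,
`D = gI` satisfies the uniallpass condition with the diagonal positive definite
matrix `Q = ((1+g)/(1−g)) I`. -/
theorem poletti_uniallpass {N : ℕ}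
    (U : Matrix (Fin N) (Fin N) ℝ) (hU : U * Uᵀ = 1)
    (g : ℝ) (hg : |g| < 1) :
    let A : Matrix (Fin N) (Fin N) ℝ := (-g) • U
    let B : Matrix (Fin N) (Fin N) ℝ := (1 + g) • (1 : Matrix (Fin N) (Fin N) ℝ)
    let C : Matrix (Fin N) (Fin N) ℝ := (1 - g) • U
    let D : Matrix (Fin N) (Fin N) ℝ := g • (1 : Matrix (Fin N) (Fin N) ℝ)
    let Q : Matrix (Fin N) (Fin N) ℝ :=
      Matrix.diagonal fun _ => (1 + g) / (1 - g)
    Q.PosDef ∧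
    A * Q * Aᵀ + B * Bᵀ = Q ∧
    A * Q * Cᵀ + B * Dᵀ = 0 ∧
    C * Q * Cᵀ + D * Dᵀ = 1 := by
  intro A B C D Q
  obtain ⟨hg1, hg2⟩ := abs_lt.mp hg
  have h1 : (0:ℝ) < 1 + g := by linarith
  have h2 : (0:ℝ) < 1 - g := by linarith
  have hQ : Q = ((1 + g) / (1 - g)) • (1 : Matrix (Fin N) (Fin N) ℝ) := by
    rw [Matrix.smul_one_eq_diagonal]
  have hc : (0:ℝ) < (1 + g) / (1 - g) := div_pos h1 h2
  refine ⟨Matrix.posDef_diagonal_iff.mpr fun _ => hc, ?_, ?_, ?_⟩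
  · show (-g) • U * Q * ((-g) • U)ᵀ + B * Bᵀ = Q
    rw [hQ]
    simp only [B, transpose_smul, transpose_one, Matrix.smul_mul, Matrix.mul_smul,
      Matrix.mul_one, Matrix.one_mul, hU, smul_smul]
    rw [← add_smul]
    congr 1
    field_simp
    ring
  · show (-g) • U * Q * ((1 - g) • U)ᵀ + B * Dᵀ = 0
    rw [hQ]
    simp only [B, D, transpose_smul, transpose_one, Matrix.smul_mul, Matrix.mul_smul,
      Matrix.mul_one, Matrix.one_mul, hU, smul_smul]
    rw [← add_smul]
    convert zero_smul ℝ (1 : Matrix (Fin N) (Fin N) ℝ) using 2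
    field_simp
    ring
  · show (1 - g) • U * Q * ((1 - g) • U)ᵀ + D * Dᵀ = 1
    rw [hQ]
    simp only [D, transpose_smul, transpose_one, Matrix.smul_mul, Matrix.mul_smul,
      Matrix.mul_one, Matrix.one_mul, hU, smul_smul]
    rw [← add_smul]
    convert one_smul ℝ (1 : Matrix (Fin N) (Fin N) ℝ) using 2
    field_simp
    ring
end
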